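/- arXiv:1505.05418 — 3 statements merged into one kernel-verified Lean document; each statement's English description precedes it below -/
import Mathlib

section
/- (Continuous dependence on initial data) Let λ:[0,T] → [c₀,∞) be absolutely continuous, c₀ > 0, and for each n let (xₙ,vₙ) be the strong solution of λẋ + v̇ + v + ∇ψ(x) = 0, v ∈ ∂φ(x) with initial data (x₀ₙ, v₀ₙ), v₀ₙ ∈ ∂φ(x₀ₙ), and (x,v) the solution with data (x₀,v₀), v₀ ∈ ∂φ(x₀). If (x₀ₙ, v₀ₙ) → (x₀, v₀) in H×H, then (xₙ, vₙ) → (x, v) uniformly on [0,T]. -/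
open MeasureTheory Set Filter
open scoped Topology

variable {H : Type*} [NormedAddCommGroup H] [InnerProductSpace ℝ H] [CompleteSpace H]

/-- `v` belongs to the convex subdifferential of `φ` at `x`. -/
def IsSubdiff (φ : H → EReal) (x v : H) : Prop :=
  ∀ y : H, φ x + ((inner ℝ v (y - x) : ℝ) : EReal) ≤ φ y

/-- `φ` is proper, convex and lower semicontinuous. -/
def ProperConvexLSC (φ : H → EReal) : Prop :=
  (∀ z, φ z ≠ ⊥) ∧ (∃ z, φ z ≠ ⊤) ∧ LowerSemicontinuous φ ∧
  (∀ z w : H, ∀ a b : ℝ, 0 ≤ a → 0 ≤ b → a + b = 1 →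
      φ (a • z + b • w) ≤ (a : EReal) * φ z + (b : EReal) * φ w)

/-- Standing assumptions: `φ` proper convex lsc, `ψ` convex with gradient `ψ'`,
and `φ + ψ` bounded below on `H`. -/
def Standing (φ : H → EReal) (ψ : H → ℝ) (ψ' : H → H) : Prop :=
  ProperConvexLSC φ ∧
  ConvexOn ℝ Set.univ ψ ∧ (∀ z, HasGradientAt ψ (ψ' z) z) ∧
  (∃ m : ℝ, ∀ z, (m : EReal) ≤ φ z + (ψ z : EReal))

/-- The energy gap `(φ+ψ)(x₀) - inf_H (φ+ψ)` as a real number. -/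
noncomputable def Egap (φ : H → EReal) (ψ : H → ℝ) (x₀ : H) : ℝ :=
  ((φ x₀ + (ψ x₀ : EReal)) - sInf (Set.range fun z => φ z + (ψ z : EReal))).toReal

/-- `(x, v)` is a strong (absolutely continuous) solution on `[0, T]` of
`v ∈ ∂φ(x)`, `λ ẋ + v̇ + v + ∇ψ(x) = 0` a.e., with a.e. derivatives `x'`, `v'`. -/
structure StrongSol (φ : H → EReal) (ψ' : H → H) (lam : ℝ → ℝ) (T : ℝ)
    (x v x' v' : ℝ → H) : Prop where
  subdiff : ∀ t ∈ Set.Icc (0:ℝ) T, IsSubdiff φ (x t) (v t)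
  xint : IntegrableOn x' (Set.Icc 0 T)
  vint : IntegrableOn v' (Set.Icc 0 T)
  xrep : ∀ t ∈ Set.Icc (0:ℝ) T, x t = x 0 + ∫ s in (0:ℝ)..t, x' s
  vrep : ∀ t ∈ Set.Icc (0:ℝ) T, v t = v 0 + ∫ s in (0:ℝ)..t, v' s
  xderiv : ∀ᵐ t ∂(volume.restrict (Set.Ioo 0 T)), HasDerivAt x (x' t) t
  vderiv : ∀ᵐ t ∂(volume.restrict (Set.Ioo 0 T)), HasDerivAt v (v' t) t
  eqn : ∀ᵐ t ∂(volume.restrict (Set.Ioo 0 T)),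
      lam t • x' t + v' t + v t + ψ' (x t) = 0


section Helpers

variable {E : Type*} [NormedAddCommGroup E] [NormedSpace ℝ E] [CompleteSpace E]

/-- integrable scalar • continuous vector is integrable on Ioc inside a compact Icc. -/
lemma helper1 {g : ℝ → ℝ} {u : ℝ → E} {a b : ℝ}
    (hg : IntegrableOn g (Ioc a b)) (hu : ContinuousOn u (Icc a b)) :
    IntegrableOn (fun s => g s • u s) (Ioc a b) := by
  obtain ⟨C, hC⟩ := isCompact_Icc.exists_bound_of_continuousOn hu
  have hmeas : AEStronglyMeasurable u (volume.restrict (Ioc a b)) :=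
    (hu.mono Ioc_subset_Icc_self).aestronglyMeasurable measurableSet_Ioc
  have hmem : MemLp u ⊤ (volume.restrict (Ioc a b)) :=
    memLp_top_of_bound hmeas C <| (ae_restrict_iff' measurableSet_Ioc).2
      (ae_of_all _ fun s hs => hC s (Ioc_subset_Icc_self hs))
  exact hg.smul_of_top_left hmem

/-- continuous scalar • integrable vector is integrable on Ioc inside a compact Icc. -/
lemma helper2 {g : ℝ → ℝ} {u : ℝ → E} {a b : ℝ}
    (hg : ContinuousOn g (Icc a b)) (hu : IntegrableOn u (Ioc a b)) :
    IntegrableOn (fun s => g s • u s) (Ioc a b) := by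
  obtain ⟨C, hC⟩ := isCompact_Icc.exists_bound_of_continuousOn hg
  have hmeas : AEStronglyMeasurable g (volume.restrict (Ioc a b)) :=
    (hg.mono Ioc_subset_Icc_self).aestronglyMeasurable measurableSet_Ioc
  have hmem : MemLp g ⊤ (volume.restrict (Ioc a b)) :=
    memLp_top_of_bound hmeas C <| (ae_restrict_iff' measurableSet_Ioc).2
      (ae_of_all _ fun s hs => hC s (Ioc_subset_Icc_self hs))
  exact hu.smul_of_top_right hmem

set_option maxHeartbeats 1000000 in
/-- "integration by parts for primitives" via Fubini on the triangle. -/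
lemma parts {g : ℝ → ℝ} {w : ℝ → E} {t : ℝ} (ht : 0 ≤ t)
    (hg : IntegrableOn g (Ioc 0 t)) (hw : IntegrableOn w (Ioc 0 t)) :
    (∫ a in Ioc (0:ℝ) t, g a) • (∫ b in Ioc (0:ℝ) t, w b)
      = (∫ a in Ioc (0:ℝ) t, g a • (∫ b in Ioc (0:ℝ) a, w b))
        + ∫ b in Ioc (0:ℝ) t, (∫ a in Ioc (0:ℝ) b, g a) • w b := by
  set A : Set ℝ := Ioc (0:ℝ) t with hA
  set μ : Measure ℝ := volume.restrict A with hμ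
  have hAm : MeasurableSet A := measurableSet_Ioc
  -- the kernel on the triangle
  set F : ℝ × ℝ → E := fun p => if p.1 < p.2 then g p.1 • w p.2 else 0 with hF
  have hFeq : F = ({p : ℝ × ℝ | p.1 < p.2}).indicator (fun p => g p.1 • w p.2) := by
    funext p
    by_cases h : p.1 < p.2
    · simp [hF, h, Set.indicator_of_mem, Set.mem_setOf_eq]
    · simp [hF, h, Set.indicator_of_notMem, Set.mem_setOf_eq]
  have hSmeas : MeasurableSet {p : ℝ × ℝ | p.1 < p.2} :=
    measurableSet_lt measurable_fst measurable_snd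
  have hFint : Integrable F (μ.prod μ) := by
    rw [hFeq]
    exact (Integrable.smul_prod hg hw).indicator hSmeas
  -- Fubini
  have hswap : ∫ a, (∫ b, F (a, b) ∂μ) ∂μ = ∫ b, (∫ a, F (a, b) ∂μ) ∂μ :=
    integral_integral_swap (f := fun a b => F (a, b)) hFint
  -- inner integral in a-first order
  have hfirst : ∀ a ∈ A, (∫ b, F (a, b) ∂μ) = g a • (∫ b in Ioc a t, w b) := by
    intro a ha
    have : (fun b => F (a, b)) = fun b => g a • (Ioi a).indicator w b := by
      funext b
      by_cases h : a < b
      · simp [hF, h, Set.indicator_of_mem, Set.mem_Ioi]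
      · simp [hF, h, Set.indicator_of_notMem, Set.mem_Ioi]
    rw [this, integral_smul, hμ, setIntegral_indicator measurableSet_Ioi]
    congr 2
    rw [hA, Set.Ioc_inter_Ioi, max_eq_right ha.1.le]
  -- inner integral in b-first order
  have hsecond : ∀ b ∈ A, (∫ a, F (a, b) ∂μ) = (∫ a in Ioc (0:ℝ) b, g a) • w b := by
    intro b hb
    have : (fun a => F (a, b)) = fun a => (Iio b).indicator g a • w b := by
      funext a
      by_cases h : a < b
      · simp [hF, h, Set.indicator_of_mem, Set.mem_Iio]
      · simp [hF, h, Set.indicator_of_notMem, Set.mem_Iio]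
    rw [this, integral_smul_const, hμ, setIntegral_indicator measurableSet_Iio]
    have : A ∩ Iio b = Ioo 0 b := by
      rw [hA]
      ext s
      constructor
      · rintro ⟨⟨h1, h2⟩, h3⟩; exact ⟨h1, h3⟩
      · rintro ⟨h1, h3⟩; exact ⟨⟨h1, h3.le.trans hb.2⟩, h3⟩
    rw [this, ← integral_Ioc_eq_integral_Ioo]
  -- split ∫_A w at a
  have hsplit : ∀ a ∈ A, (∫ b in A, w b) = (∫ b in Ioc (0:ℝ) a, w b) + ∫ b in Ioc a t, w b := by
    intro a ha
    rw [hA, ← setIntegral_union (Set.Ioc_disjoint_Ioc_of_le le_rfl) measurableSet_Ioc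
      (hw.mono_set (Set.Ioc_subset_Ioc le_rfl ha.2)) (hw.mono_set (Set.Ioc_subset_Ioc ha.1.le le_rfl)),
      Set.Ioc_union_Ioc_eq_Ioc ha.1.le ha.2]
  -- integrability of the two pieces in the a-variable
  have hXcont : ContinuousOn (fun a => ∫ b in Ioc (0:ℝ) a, w b) (Icc 0 t) :=
    intervalIntegral.continuousOn_primitive (by rwa [integrableOn_Icc_iff_integrableOn_Ioc])
  have h1 : IntegrableOn (fun a => g a • (∫ b in Ioc (0:ℝ) a, w b)) A := helper1 hg hXcont
  have h2 : Integrable (fun a => ∫ b, F (a, b) ∂μ) μ := hFint.integral_prod_left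
  -- main computation
  have lhs1 : (∫ a in A, g a) • (∫ b in A, w b) = ∫ a in A, g a • (∫ b in A, w b) := by
    rw [integral_smul_const]
  have step : ∀ a ∈ A, g a • (∫ b in A, w b)
      = g a • (∫ b in Ioc (0:ℝ) a, w b) + (∫ b, F (a, b) ∂μ) := by
    intro a ha
    rw [hsplit a ha, smul_add, hfirst a ha]
  calc (∫ a in A, g a) • (∫ b in A, w b)
      = ∫ a in A, (g a • (∫ b in Ioc (0:ℝ) a, w b) + (∫ b, F (a, b) ∂μ)) := by
        rw [lhs1]; exact setIntegral_congr_fun hAm step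
    _ = (∫ a in A, g a • (∫ b in Ioc (0:ℝ) a, w b)) + ∫ a, (∫ b, F (a, b) ∂μ) ∂μ := by
        exact integral_add h1 h2
    _ = (∫ a in A, g a • (∫ b in Ioc (0:ℝ) a, w b)) + ∫ b in A, (∫ a in Ioc (0:ℝ) b, g a) • w b := by
        rw [hswap]; congr 1; exact setIntegral_congr_fun hAm hsecond
open MeasureTheory Set Filter
open scoped Topology

/-- A lossy Grönwall lemma with `L¹` coefficient, with constant independent of `f` and `B`. -/
lemma gronwall_aux {k : ℝ → ℝ} {T : ℝ} (hT : 0 < T)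
    (hk : IntegrableOn k (Set.Icc 0 T)) (hk0 : ∀ s, 0 ≤ k s) :
    ∃ C : ℝ, 1 ≤ C ∧ ∀ (f : ℝ → ℝ) (B : ℝ), 0 ≤ B → ContinuousOn f (Set.Icc 0 T) →
      (∀ t ∈ Set.Icc (0:ℝ) T, 0 ≤ f t) →
      (∀ t ∈ Set.Icc (0:ℝ) T, f t ≤ B + ∫ s in Set.Ioc (0:ℝ) t, k s * f s) →
      ∀ t ∈ Set.Icc (0:ℝ) T, f t ≤ C * B := by
  set K : ℝ → ℝ := fun r => ∫ s in Set.Ioc (0:ℝ) r, k s with hK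
  have hKc : ContinuousOn K (Set.Icc 0 T) := intervalIntegral.continuousOn_primitive hk
  have hKu : UniformContinuousOn K (Set.Icc 0 T) :=
    isCompact_Icc.uniformContinuousOn_of_continuous hKc
  obtain ⟨δ', hδ'pos, hδ'⟩ := (Metric.uniformContinuousOn_iff.1 hKu) (1/2) (by norm_num)
  set δ : ℝ := δ' / 2 with hδdef
  have hδpos : 0 < δ := by positivity
  have hδ : ∀ a b : ℝ, a ∈ Set.Icc (0:ℝ) T → b ∈ Set.Icc (0:ℝ) T → |a - b| ≤ δ →
      |K a - K b| ≤ 1/2 := by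
    intro a b ha hb hab
    have := hδ' a ha b hb (by
      rw [Real.dist_eq]
      calc |a - b| ≤ δ := hab
        _ < δ' := by rw [hδdef]; linarith)
    rw [Real.dist_eq] at this; exact this.le
  set KT : ℝ := ∫ s in Set.Ioc (0:ℝ) T, k s with hKT
  have hKTnn : 0 ≤ KT := setIntegral_nonneg measurableSet_Ioc fun s _ => hk0 s
  set N : ℕ := ⌈T / δ⌉₊ with hN
  have hNδ : T ≤ N * δ := by
    rw [hN]
    calc T = (T / δ) * δ := by field_simp
      _ ≤ (⌈T / δ⌉₊ : ℝ) * δ := by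
          apply mul_le_mul_of_nonneg_right (Nat.le_ceil _) hδpos.le
  -- recursive constants
  set c : ℕ → ℝ := fun i => Nat.rec 1 (fun _ ci => 2 * (1 + KT * ci) + ci) i with hc
  have hc0 : c 0 = 1 := rfl
  have hcs : ∀ i, c (i + 1) = 2 * (1 + KT * c i) + c i := fun i => rfl
  have hc1 : ∀ i, 1 ≤ c i := by
    intro i; induction i with
    | zero => simp [hc0]
    | succ i ih => rw [hcs]; nlinarith
  refine ⟨c N, hc1 N, ?_⟩
  intro f B hB hfc hf0 hineq
  -- integrability of k * f
  have hkf : IntegrableOn (fun s => k s * f s) (Set.Ioc 0 T) := by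
    have := helper1 (E := ℝ) (hk.mono_set Set.Ioc_subset_Icc_self) hfc
    simpa [smul_eq_mul] using this
  -- the induction
  have main : ∀ i : ℕ, ∀ t ∈ Set.Icc (0:ℝ) T, t ≤ i * δ → f t ≤ c i * B := by
    intro i
    induction i with
    | zero =>
      intro t ht ht0
      have : t = 0 := le_antisymm (by simpa using ht0) ht.1
      subst this
      have := hineq 0 ⟨le_rfl, hT.le⟩
      simpa [hc0] using this
    | succ i ih =>
      intro t ht htle
      by_cases hcase : t ≤ i * δ
      · exact le_trans (ih t ht hcase) (by
          apply mul_le_mul_of_nonneg_right _ hB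
          rw [hcs]; nlinarith [hc1 i])
      push_neg at hcase
      set a : ℝ := i * δ with ha
      have ha0 : 0 ≤ a := by positivity
      have haT : a < T := lt_of_lt_of_le hcase ht.2
      set e : ℝ := min ((i + 1 : ℕ) * δ) T with he
      have hae : a ≤ e := le_min (by push_cast; nlinarith) haT.le
      have htP : t ∈ Set.Icc a e := ⟨hcase.le, le_min htle ht.2⟩
      set P : Set ℝ := Set.Icc a e with hP
      have hPsub : P ⊆ Set.Icc 0 T := fun r hr =>
        ⟨le_trans ha0 hr.1, le_trans hr.2 (min_le_right _ _)⟩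
      have hPne : P.Nonempty := ⟨t, htP⟩
      have himg : IsCompact (f '' P) := (isCompact_Icc.image_of_continuousOn (hfc.mono hPsub))
      have hbdd : BddAbove (f '' P) := himg.bddAbove
      set M : ℝ := sSup (f '' P) with hM
      have hMle : ∀ r ∈ P, f r ≤ M := fun r hr => le_csSup hbdd ⟨r, hr, rfl⟩
      have hM0 : 0 ≤ M := le_trans (hf0 t ht) (hMle t htP)
      -- the key bound on P
      have key : ∀ r ∈ P, f r ≤ (B + KT * (c i * B)) + (1/2) * M := by
        intro r hr
        have hrT : r ∈ Set.Icc (0:ℝ) T := hPsub hr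
        have har : a ≤ r := hr.1
        have hsplit : (∫ s in Set.Ioc (0:ℝ) r, k s * f s)
            = (∫ s in Set.Ioc (0:ℝ) a, k s * f s) + ∫ s in Set.Ioc a r, k s * f s := by
          rw [← setIntegral_union (Set.Ioc_disjoint_Ioc_of_le le_rfl) measurableSet_Ioc
            (hkf.mono_set (Set.Ioc_subset_Ioc le_rfl haT.le))
            (hkf.mono_set (Set.Ioc_subset_Ioc ha0 hrT.2)),
            Set.Ioc_union_Ioc_eq_Ioc ha0 har]
        have hb1 : (∫ s in Set.Ioc (0:ℝ) a, k s * f s) ≤ KT * (c i * B) := by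
          have h1 : (∫ s in Set.Ioc (0:ℝ) a, k s * f s)
              ≤ ∫ s in Set.Ioc (0:ℝ) a, k s * (c i * B) := by
            apply setIntegral_mono_on
              (hkf.mono_set (Set.Ioc_subset_Ioc le_rfl haT.le))
              ((hk.mono_set Set.Ioc_subset_Icc_self).mono_set
                (Set.Ioc_subset_Ioc le_rfl haT.le) |>.mul_const _)
              measurableSet_Ioc
            intro s hs
            have hsT : s ∈ Set.Icc (0:ℝ) T := ⟨hs.1.le, hs.2.trans haT.le⟩
            exact mul_le_mul_of_nonneg_left (ih s hsT hs.2) (hk0 s)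
          rw [integral_mul_const] at h1
          refine h1.trans ?_
          have hciB : (0:ℝ) ≤ c i * B := mul_nonneg (by linarith [hc1 i]) hB
          have hKle : (∫ s in Set.Ioc (0:ℝ) a, k s) ≤ KT := by
            rw [hKT]
            apply setIntegral_mono_set (hk.mono_set Set.Ioc_subset_Icc_self)
              (ae_of_all _ fun s => hk0 s)
            exact HasSubset.Subset.eventuallyLE (Set.Ioc_subset_Ioc le_rfl haT.le)
          exact mul_le_mul_of_nonneg_right hKle hciB
        have hb2 : (∫ s in Set.Ioc a r, k s * f s) ≤ (1/2) * M := by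
          have h1 : (∫ s in Set.Ioc a r, k s * f s) ≤ ∫ s in Set.Ioc a r, k s * M := by
            apply setIntegral_mono_on
              (hkf.mono_set (Set.Ioc_subset_Ioc ha0 hrT.2))
              (((hk.mono_set Set.Ioc_subset_Icc_self).mono_set
                (Set.Ioc_subset_Ioc ha0 hrT.2)).mul_const _)
              measurableSet_Ioc
            intro s hs
            have hsP : s ∈ P := ⟨hs.1.le, hs.2.trans hr.2⟩
            exact mul_le_mul_of_nonneg_left (hMle s hsP) (hk0 s)
          rw [integral_mul_const] at h1
          refine h1.trans ?_
          have hKdiff : (∫ s in Set.Ioc a r, k s) = K r - K a := by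
            rw [hK]
            rw [eq_sub_iff_add_eq, add_comm, ← setIntegral_union (Set.Ioc_disjoint_Ioc_of_le le_rfl)
              measurableSet_Ioc
              ((hk.mono_set Set.Ioc_subset_Icc_self).mono_set (Set.Ioc_subset_Ioc le_rfl haT.le))
              ((hk.mono_set Set.Ioc_subset_Icc_self).mono_set (Set.Ioc_subset_Ioc ha0 hrT.2)),
              Set.Ioc_union_Ioc_eq_Ioc ha0 har]
          have hKhalf : (∫ s in Set.Ioc a r, k s) ≤ 1/2 := by
            rw [hKdiff]
            have hra : |r - a| ≤ δ := by
              rw [abs_of_nonneg (by linarith)]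
              have : r ≤ e := hr.2
              have : r ≤ (i + 1 : ℕ) * δ := le_trans this (min_le_left _ _)
              push_cast at this ⊢
              nlinarith
            have := hδ r a hrT ⟨ha0, haT.le⟩ hra
            have := abs_le.1 this
            linarith [this.2]
          exact mul_le_mul_of_nonneg_right hKhalf hM0
        have hfr := hineq r hrT
        rw [hsplit] at hfr
        linarith
      -- conclude sSup bound
      have hMbound : M ≤ (B + KT * (c i * B)) + (1/2) * M := by
        apply csSup_le (hPne.image f)
        rintro y ⟨r, hr, rfl⟩
        exact key r hr
      have hMfin : M ≤ 2 * (B + KT * (c i * B)) := by linarith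
      have hciB : (0:ℝ) ≤ c i * B := mul_nonneg (by linarith [hc1 i]) hB
      have hft : f t ≤ M := hMle t htP
      rw [hcs]
      nlinarith [hKTnn, hB, hciB]
  intro t ht
  exact main N t ht (le_trans ht.2 hNδ)

end Helpers

section Hilb
variable {H : Type*} [NormedAddCommGroup H] [InnerProductSpace ℝ H] [CompleteSpace H]

lemma subdiff_mono' {φ : H → EReal} (hbot : ∀ z, φ z ≠ ⊥) (htop : ∃ z, φ z ≠ ⊤)
    {a b va vb : H} (ha : IsSubdiff φ a va) (hb : IsSubdiff φ b vb) :
    0 ≤ (inner ℝ (a - b) (va - vb) : ℝ) := by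
  obtain ⟨z₀, hz₀⟩ := htop
  have hfin : ∀ (p vp : H), IsSubdiff φ p vp → φ p ≠ ⊤ := by
    intro p vp hp hcon
    have := hp z₀
    rw [hcon] at this
    rw [EReal.top_add_coe] at this
    exact hz₀ (top_le_iff.1 this)
  have hA := hfin a va ha
  have hB := hfin b vb hb
  set A : ℝ := (φ a).toReal with hAdef
  set B : ℝ := (φ b).toReal with hBdef
  have hA' : φ a = (A : EReal) := (EReal.coe_toReal hA (hbot a)).symm
  have hB' : φ b = (B : EReal) := (EReal.coe_toReal hB (hbot b)).symm
  have h1 := ha b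
  have h2 := hb a
  rw [hA', hB'] at h1 h2
  rw [← EReal.coe_add, EReal.coe_le_coe_iff] at h1 h2
  have hsum : (inner ℝ va (b - a) : ℝ) + (inner ℝ vb (a - b) : ℝ) ≤ 0 := by linarith
  have e1 : (inner ℝ va (b - a) : ℝ) = -(inner ℝ (a - b) va : ℝ) := by
    rw [show b - a = -(a - b) by abel, inner_neg_right, real_inner_comm]
  have e2 : (inner ℝ vb (a - b) : ℝ) = (inner ℝ (a - b) vb : ℝ) := real_inner_comm _ _
  rw [e1, e2] at hsum
  rw [inner_sub_right]
  linarith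

lemma norm_ineq {l c₀ : ℝ} (hc : 0 < c₀) (hl : c₀ ≤ l) {p q : H}
    (hpq : 0 ≤ (inner ℝ p q : ℝ)) :
    ‖q‖ ≤ ‖l • p + q‖ ∧ c₀ * ‖p‖ ≤ ‖l • p + q‖ := by
  have hsq : ‖l • p + q‖ ^ 2 = l^2 * ‖p‖^2 + 2 * (l * (inner ℝ p q : ℝ)) + ‖q‖^2 := by
    rw [norm_add_sq_real, real_inner_smul_left, norm_smul]
    rw [Real.norm_eq_abs, abs_of_pos (lt_of_lt_of_le hc hl)]
    ring
  have hlpos : 0 < l := lt_of_lt_of_le hc hl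
  have h1 : ‖q‖^2 ≤ ‖l • p + q‖^2 := by
    rw [hsq]
    linarith [mul_nonneg hlpos.le hpq, mul_nonneg (sq_nonneg l) (sq_nonneg ‖p‖)]
  have h2 : (c₀ * ‖p‖)^2 ≤ ‖l • p + q‖^2 := by
    rw [hsq]
    nlinarith [mul_nonneg hlpos.le hpq,
      mul_nonneg (mul_nonneg (sub_nonneg.2 hl) (by linarith : (0:ℝ) ≤ l + c₀)) (sq_nonneg ‖p‖)]
  constructor
  · have := Real.sqrt_le_sqrt h1
    rwa [Real.sqrt_sq (norm_nonneg _), Real.sqrt_sq (norm_nonneg _)] at this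
  · have := Real.sqrt_le_sqrt h2
    rwa [Real.sqrt_sq (mul_nonneg hc.le (norm_nonneg p)),
      Real.sqrt_sq (norm_nonneg _)] at this

end Hilb

section KeyEst
variable {H : Type*} [NormedAddCommGroup H] [InnerProductSpace ℝ H] [CompleteSpace H]

lemma cont_of_rep {E : Type*} [NormedAddCommGroup E] [NormedSpace ℝ E] [CompleteSpace E]
    {T : ℝ} (hT : 0 ≤ T) {u u' : ℝ → E}
    (hint : IntegrableOn u' (Set.Icc 0 T))
    (hrep : ∀ t ∈ Set.Icc (0:ℝ) T, u t = u 0 + ∫ s in (0:ℝ)..t, u' s) :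
    ContinuousOn u (Set.Icc 0 T) := by
  have h := intervalIntegral.continuousOn_primitive_interval (a := (0:ℝ)) (b := T)
    (μ := volume) (f := u') (by rwa [Set.uIcc_of_le hT])
  rw [Set.uIcc_of_le hT] at h
  exact (continuousOn_const.add h).congr fun t ht => hrep t ht

set_option maxHeartbeats 2000000 in
lemma key_est {φ : H → EReal} {ψ' : H → H} {lam lam' : ℝ → ℝ} {T c₀ Lψ : ℝ}
    (hbot : ∀ z, φ z ≠ ⊥) (htop : ∃ z, φ z ≠ ⊤)
    (hLψ : 0 ≤ Lψ) (hlip : ∀ a b : H, ‖ψ' a - ψ' b‖ ≤ Lψ * ‖a - b‖)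
    (hT : 0 < T) (hc₀ : 0 < c₀)
    (hlam : ∀ t ∈ Set.Icc (0:ℝ) T, c₀ ≤ lam t)
    (hlamint : IntegrableOn lam' (Set.Icc 0 T))
    (hlamrep : ∀ t ∈ Set.Icc (0:ℝ) T, lam t = lam 0 + ∫ s in (0:ℝ)..t, lam' s)
    {x₁ v₁ x₁' v₁' x₂ v₂ x₂' v₂' : ℝ → H}
    (s₁ : StrongSol φ ψ' lam T x₁ v₁ x₁' v₁')
    (s₂ : StrongSol φ ψ' lam T x₂ v₂ x₂' v₂')
    {C : ℝ} (hC : 1 ≤ C)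
    (hgr : ∀ (f : ℝ → ℝ) (B : ℝ), 0 ≤ B → ContinuousOn f (Set.Icc 0 T) →
      (∀ t ∈ Set.Icc (0:ℝ) T, 0 ≤ f t) →
      (∀ t ∈ Set.Icc (0:ℝ) T, f t ≤ B + ∫ s in Set.Ioc (0:ℝ) t,
        (|lam' s| / c₀ + 1 + Lψ / c₀) * f s) →
      ∀ t ∈ Set.Icc (0:ℝ) T, f t ≤ C * B) :
    ∀ t ∈ Set.Icc (0:ℝ) T,
      c₀ * ‖x₁ t - x₂ t‖ ≤ C * (lam 0 * ‖x₁ 0 - x₂ 0‖ + ‖v₁ 0 - v₂ 0‖) ∧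
      ‖v₁ t - v₂ t‖ ≤ C * (lam 0 * ‖x₁ 0 - x₂ 0‖ + ‖v₁ 0 - v₂ 0‖) := by
  have hT0 : (0:ℝ) ∈ Set.Icc (0:ℝ) T := ⟨le_rfl, hT.le⟩
  set dx : ℝ → H := fun t => x₁ t - x₂ t with hdx
  set dv : ℝ → H := fun t => v₁ t - v₂ t with hdvdef
  set dx' : ℝ → H := fun t => x₁' t - x₂' t with hdx'
  set dv' : ℝ → H := fun t => v₁' t - v₂' t with hdv'
  set dg : ℝ → H := fun t => ψ' (x₁ t) - ψ' (x₂ t) with hdg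
  -- continuity
  have hx₁c := cont_of_rep hT.le s₁.xint s₁.xrep
  have hx₂c := cont_of_rep hT.le s₂.xint s₂.xrep
  have hv₁c := cont_of_rep hT.le s₁.vint s₁.vrep
  have hv₂c := cont_of_rep hT.le s₂.vint s₂.vrep
  have hlamc := cont_of_rep hT.le hlamint hlamrep
  have hdxc : ContinuousOn dx (Set.Icc 0 T) := hx₁c.sub hx₂c
  have hdvc : ContinuousOn dv (Set.Icc 0 T) := hv₁c.sub hv₂c
  have hψc : Continuous ψ' := by
    have : LipschitzWith (Real.toNNReal Lψ) ψ' :=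
      LipschitzWith.of_dist_le_mul (fun a b => by
        rw [dist_eq_norm, dist_eq_norm, Real.coe_toNNReal _ hLψ]; exact hlip a b)
    exact this.continuous
  have hdgc : ContinuousOn dg (Set.Icc 0 T) :=
    (hψc.comp_continuousOn hx₁c).sub (hψc.comp_continuousOn hx₂c)
  -- monotonicity
  have hmono : ∀ t ∈ Set.Icc (0:ℝ) T, 0 ≤ (inner ℝ (dx t) (dv t) : ℝ) := fun t ht =>
    subdiff_mono' hbot htop (s₁.subdiff t ht) (s₂.subdiff t ht)
  set du : ℝ → H := fun t => lam t • dx t + dv t with hdu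
  set f : ℝ → ℝ := fun t => ‖du t‖ with hfdef
  have hduc : ContinuousOn du (Set.Icc 0 T) := (hlamc.smul hdxc).add hdvc
  have hfc : ContinuousOn f (Set.Icc 0 T) := hduc.norm
  have hnorm : ∀ t ∈ Set.Icc (0:ℝ) T, ‖dv t‖ ≤ f t ∧ c₀ * ‖dx t‖ ≤ f t := fun t ht =>
    norm_ineq hc₀ (hlam t ht) (hmono t ht)
  -- integrabilities
  have hdx'i : IntegrableOn dx' (Set.Icc 0 T) := s₁.xint.sub s₂.xint
  have hdv'i : IntegrableOn dv' (Set.Icc 0 T) := s₁.vint.sub s₂.vint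
  have hdvi : IntegrableOn dv (Set.Icc 0 T) := hdvc.integrableOn_Icc
  have hdgi : IntegrableOn dg (Set.Icc 0 T) := hdgc.integrableOn_Icc
  have hIoc : ∀ t ∈ Set.Icc (0:ℝ) T, Set.Ioc (0:ℝ) t ⊆ Set.Icc (0:ℝ) T :=
    fun t ht s hs => ⟨hs.1.le, hs.2.trans ht.2⟩
  -- representations with set integrals
  have hdxrep : ∀ t ∈ Set.Icc (0:ℝ) T, dx t = dx 0 + ∫ s in Set.Ioc (0:ℝ) t, dx' s := by
    intro t ht
    have e₁ := s₁.xrep t ht; have e₂ := s₂.xrep t ht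
    rw [intervalIntegral.integral_of_le ht.1] at e₁ e₂
    have hsub := integral_sub (s₁.xint.mono_set (hIoc t ht)) (s₂.xint.mono_set (hIoc t ht))
    calc dx t = (x₁ 0 + ∫ s in Set.Ioc (0:ℝ) t, x₁' s)
        - (x₂ 0 + ∫ s in Set.Ioc (0:ℝ) t, x₂' s) := by rw [← e₁, ← e₂]
      _ = dx 0 + ((∫ s in Set.Ioc (0:ℝ) t, x₁' s) - ∫ s in Set.Ioc (0:ℝ) t, x₂' s) := by
          simp only [hdx]; abel
      _ = dx 0 + ∫ s in Set.Ioc (0:ℝ) t, dx' s := by rw [← hsub]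
  have hdvrep : ∀ t ∈ Set.Icc (0:ℝ) T, dv t = dv 0 + ∫ s in Set.Ioc (0:ℝ) t, dv' s := by
    intro t ht
    have e₁ := s₁.vrep t ht; have e₂ := s₂.vrep t ht
    rw [intervalIntegral.integral_of_le ht.1] at e₁ e₂
    have hsub := integral_sub (s₁.vint.mono_set (hIoc t ht)) (s₂.vint.mono_set (hIoc t ht))
    calc dv t = (v₁ 0 + ∫ s in Set.Ioc (0:ℝ) t, v₁' s)
        - (v₂ 0 + ∫ s in Set.Ioc (0:ℝ) t, v₂' s) := by rw [← e₁, ← e₂]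
      _ = dv 0 + ((∫ s in Set.Ioc (0:ℝ) t, v₁' s) - ∫ s in Set.Ioc (0:ℝ) t, v₂' s) := by
          simp only [hdvdef]; abel
      _ = dv 0 + ∫ s in Set.Ioc (0:ℝ) t, dv' s := by rw [← hsub]
  have hlamrep' : ∀ t ∈ Set.Icc (0:ℝ) T, lam t = lam 0 + ∫ s in Set.Ioc (0:ℝ) t, lam' s := by
    intro t ht
    rw [hlamrep t ht, intervalIntegral.integral_of_le ht.1]
  -- product rule via `parts`
  have hprod : ∀ t ∈ Set.Icc (0:ℝ) T, lam t • dx t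
      = lam 0 • dx 0 + ((∫ s in Set.Ioc (0:ℝ) t, lam' s • dx s)
        + ∫ s in Set.Ioc (0:ℝ) t, lam s • dx' s) := by
    intro t ht
    have hsub := hIoc t ht
    have hIccsub : Set.Icc (0:ℝ) t ⊆ Set.Icc (0:ℝ) T := Set.Icc_subset_Icc le_rfl ht.2
    have hgI : IntegrableOn lam' (Set.Ioc 0 t) := hlamint.mono_set hsub
    have hwI : IntegrableOn dx' (Set.Ioc 0 t) := hdx'i.mono_set hsub
    have hparts := parts ht.1 hgI hwI
    have h1 : (∫ a in Set.Ioc (0:ℝ) t, lam' a • (∫ b in Set.Ioc (0:ℝ) a, dx' b))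
        = (∫ a in Set.Ioc (0:ℝ) t, lam' a • dx a)
          - (∫ a in Set.Ioc (0:ℝ) t, lam' a) • dx 0 := by
      rw [← integral_smul_const,
        ← integral_sub (helper1 hgI (hdxc.mono hIccsub)) (hgI.smul_const (dx 0))]
      apply setIntegral_congr_fun measurableSet_Ioc
      intro a ha
      have haI : a ∈ Set.Icc (0:ℝ) T := ⟨ha.1.le, ha.2.trans ht.2⟩
      show lam' a • (∫ b in Set.Ioc (0:ℝ) a, dx' b) = lam' a • dx a - lam' a • dx 0
      have hXa : (∫ b in Set.Ioc (0:ℝ) a, dx' b) = dx a - dx 0 := by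
        rw [hdxrep a haI]; abel
      rw [hXa, smul_sub]
    have h2 : (∫ b in Set.Ioc (0:ℝ) t, (∫ a in Set.Ioc (0:ℝ) b, lam' a) • dx' b)
        = (∫ b in Set.Ioc (0:ℝ) t, lam b • dx' b)
          - lam 0 • ∫ b in Set.Ioc (0:ℝ) t, dx' b := by
      have hconst : IntegrableOn (fun b => lam 0 • dx' b) (Set.Ioc 0 t) := hwI.smul (lam 0)
      rw [← integral_smul,
        ← integral_sub (helper2 (hlamc.mono hIccsub) hwI) hconst]
      apply setIntegral_congr_fun measurableSet_Ioc
      intro b hb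
      have hbI : b ∈ Set.Icc (0:ℝ) T := ⟨hb.1.le, hb.2.trans ht.2⟩
      show (∫ a in Set.Ioc (0:ℝ) b, lam' a) • dx' b = lam b • dx' b - lam 0 • dx' b
      have hLb : (∫ a in Set.Ioc (0:ℝ) b, lam' a) = lam b - lam 0 := by
        rw [hlamrep' b hbI]; ring
      rw [hLb, sub_smul]
    rw [h1, h2] at hparts
    rw [hlamrep' t ht, hdxrep t ht, add_smul, smul_add, smul_add, hparts]
    abel
  -- integrating the equation
  have heqn : ∀ t ∈ Set.Icc (0:ℝ) T,
      (∫ s in Set.Ioc (0:ℝ) t, (lam s • dx' s + dv' s))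
        = - ∫ s in Set.Ioc (0:ℝ) t, (dv s + dg s) := by
    intro t ht
    have h₁ := (ae_restrict_iff' measurableSet_Ioo).1 s₁.eqn
    have h₂ := (ae_restrict_iff' measurableSet_Ioo).1 s₂.eqn
    have hneT : ∀ᵐ s : ℝ ∂volume, s ≠ T := by
      rw [ae_iff]
      simpa using measure_singleton (T : ℝ)
    have hae : ∀ᵐ s ∂(volume.restrict (Set.Ioc (0:ℝ) t)),
        lam s • dx' s + dv' s = -(dv s + dg s) := by
      filter_upwards [ae_restrict_of_ae h₁, ae_restrict_of_ae h₂, ae_restrict_of_ae hneT,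
        ae_restrict_mem measurableSet_Ioc] with s hs₁ hs₂ hsne hsmem
      have hsIoo : s ∈ Set.Ioo (0:ℝ) T :=
        ⟨hsmem.1, lt_of_le_of_ne (hsmem.2.trans ht.2) hsne⟩
      have e₁ := hs₁ hsIoo
      have e₂ := hs₂ hsIoo
      have h5 : lam s • dx' s + dv' s + (dv s + dg s) = 0 := by
        have expand : lam s • dx' s + dv' s + (dv s + dg s)
            = (lam s • x₁' s + v₁' s + v₁ s + ψ' (x₁ s))
              - (lam s • x₂' s + v₂' s + v₂ s + ψ' (x₂ s)) := by
          simp only [hdx', hdv', hdvdef, hdg, smul_sub]; abel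
        rw [expand, e₁, e₂, sub_zero]
      exact eq_neg_of_add_eq_zero_left h5
    rw [setIntegral_congr_ae measurableSet_Ioc
      ((ae_restrict_iff' measurableSet_Ioc).1 hae), integral_neg]
  -- representation of du
  have hdurep : ∀ t ∈ Set.Icc (0:ℝ) T,
      du t = du 0 + ∫ s in Set.Ioc (0:ℝ) t, (lam' s • dx s - (dv s + dg s)) := by
    intro t ht
    have hsub := hIoc t ht
    have hIccsub : Set.Icc (0:ℝ) t ⊆ Set.Icc (0:ℝ) T := Set.Icc_subset_Icc le_rfl ht.2
    have hI1 : IntegrableOn (fun s => lam' s • dx s) (Set.Ioc 0 t) :=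
      helper1 (hlamint.mono_set hsub) (hdxc.mono hIccsub)
    have hI2 : IntegrableOn (fun s => lam s • dx' s) (Set.Ioc 0 t) :=
      helper2 (hlamc.mono hIccsub) (hdx'i.mono_set hsub)
    have hI3 : IntegrableOn dv' (Set.Ioc 0 t) := hdv'i.mono_set hsub
    have hI4 : IntegrableOn (fun s => dv s + dg s) (Set.Ioc 0 t) :=
      (hdvi.mono_set hsub).add (hdgi.mono_set hsub)
    calc du t = lam t • dx t + dv t := rfl
      _ = (lam 0 • dx 0 + ((∫ s in Set.Ioc (0:ℝ) t, lam' s • dx s)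
            + ∫ s in Set.Ioc (0:ℝ) t, lam s • dx' s))
          + (dv 0 + ∫ s in Set.Ioc (0:ℝ) t, dv' s) := by
            rw [← hprod t ht, ← hdvrep t ht]
      _ = (lam 0 • dx 0 + dv 0) + ((∫ s in Set.Ioc (0:ℝ) t, lam' s • dx s)
          + ((∫ s in Set.Ioc (0:ℝ) t, lam s • dx' s)
            + ∫ s in Set.Ioc (0:ℝ) t, dv' s)) := by abel
      _ = (lam 0 • dx 0 + dv 0) + ((∫ s in Set.Ioc (0:ℝ) t, lam' s • dx s)
          + ∫ s in Set.Ioc (0:ℝ) t, (lam s • dx' s + dv' s)) := by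
            rw [integral_add hI2 hI3]
      _ = (lam 0 • dx 0 + dv 0) + ((∫ s in Set.Ioc (0:ℝ) t, lam' s • dx s)
          - ∫ s in Set.Ioc (0:ℝ) t, (dv s + dg s)) := by
            rw [heqn t ht]; abel
      _ = du 0 + ∫ s in Set.Ioc (0:ℝ) t, (lam' s • dx s - (dv s + dg s)) := by
            rw [integral_sub hI1 hI4]
  -- the Grönwall inequality
  have hwIT : IntegrableOn (fun s => lam' s • dx s - (dv s + dg s)) (Set.Ioc 0 T) :=
    (helper1 (hlamint.mono_set Set.Ioc_subset_Icc_self) hdxc).sub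
      ((hdvi.mono_set Set.Ioc_subset_Icc_self).add (hdgi.mono_set Set.Ioc_subset_Icc_self))
  have hk : IntegrableOn (fun s => |lam' s| / c₀ + 1 + Lψ / c₀) (Set.Icc 0 T) := by
    apply Integrable.add
    apply Integrable.add
    · exact hlamint.abs.div_const c₀
    · exact integrableOn_const measure_Icc_lt_top.ne
    · exact integrableOn_const measure_Icc_lt_top.ne
  have hkf : IntegrableOn (fun s => (|lam' s| / c₀ + 1 + Lψ / c₀) * f s) (Set.Ioc 0 T) := by
    have := helper1 (E := ℝ) (hk.mono_set Set.Ioc_subset_Icc_self) hfc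
    simpa [smul_eq_mul] using this
  have hineq : ∀ t ∈ Set.Icc (0:ℝ) T,
      f t ≤ f 0 + ∫ s in Set.Ioc (0:ℝ) t, (|lam' s| / c₀ + 1 + Lψ / c₀) * f s := by
    intro t ht
    have h1 : f t ≤ f 0 + ‖∫ s in Set.Ioc (0:ℝ) t, (lam' s • dx s - (dv s + dg s))‖ := by
      show ‖du t‖ ≤ _
      rw [hdurep t ht]
      exact norm_add_le _ _
    have h2 : ‖∫ s in Set.Ioc (0:ℝ) t, (lam' s • dx s - (dv s + dg s))‖
        ≤ ∫ s in Set.Ioc (0:ℝ) t, ‖lam' s • dx s - (dv s + dg s)‖ :=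
      norm_integral_le_integral_norm _
    have h3 : (∫ s in Set.Ioc (0:ℝ) t, ‖lam' s • dx s - (dv s + dg s)‖)
        ≤ ∫ s in Set.Ioc (0:ℝ) t, (|lam' s| / c₀ + 1 + Lψ / c₀) * f s := by
      apply setIntegral_mono_on
        ((hwIT.mono_set (Set.Ioc_subset_Ioc le_rfl ht.2)).norm)
        (hkf.mono_set (Set.Ioc_subset_Ioc le_rfl ht.2))
        measurableSet_Ioc
      intro s hs
      have hsI : s ∈ Set.Icc (0:ℝ) T := ⟨hs.1.le, hs.2.trans ht.2⟩
      obtain ⟨hv, hx⟩ := hnorm s hsI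
      have hdxle : ‖dx s‖ ≤ f s / c₀ := by
        rw [le_div_iff₀ hc₀]; linarith
      have htri : ‖lam' s • dx s - (dv s + dg s)‖
          ≤ |lam' s| * ‖dx s‖ + (‖dv s‖ + ‖dg s‖) := by
        calc ‖lam' s • dx s - (dv s + dg s)‖
            ≤ ‖lam' s • dx s‖ + ‖dv s + dg s‖ := norm_sub_le _ _
          _ ≤ |lam' s| * ‖dx s‖ + (‖dv s‖ + ‖dg s‖) := by
              rw [norm_smul, Real.norm_eq_abs]
              exact add_le_add_right (norm_add_le _ _) _
      have hdgle : ‖dg s‖ ≤ Lψ * (f s / c₀) :=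
        (hlip (x₁ s) (x₂ s)).trans (mul_le_mul_of_nonneg_left hdxle hLψ)
      have hlx : |lam' s| * ‖dx s‖ ≤ |lam' s| * (f s / c₀) :=
        mul_le_mul_of_nonneg_left hdxle (abs_nonneg _)
      have hring : (|lam' s| / c₀ + 1 + Lψ / c₀) * f s
          = |lam' s| * (f s / c₀) + f s + Lψ * (f s / c₀) := by ring
      rw [hring]
      linarith
    linarith
  have hf0 : ∀ t ∈ Set.Icc (0:ℝ) T, 0 ≤ f t := fun t _ => norm_nonneg _
  have happ := hgr f (f 0) (norm_nonneg _) hfc hf0 hineq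
  have hf0le : f 0 ≤ lam 0 * ‖dx 0‖ + ‖dv 0‖ := by
    calc f 0 = ‖lam 0 • dx 0 + dv 0‖ := rfl
      _ ≤ ‖lam 0 • dx 0‖ + ‖dv 0‖ := norm_add_le _ _
      _ = lam 0 * ‖dx 0‖ + ‖dv 0‖ := by
          rw [norm_smul, Real.norm_eq_abs, abs_of_pos (lt_of_lt_of_le hc₀ (hlam 0 hT0))]
  intro t ht
  have hft := happ t ht
  have hCf : C * f 0 ≤ C * (lam 0 * ‖dx 0‖ + ‖dv 0‖) :=
    mul_le_mul_of_nonneg_left hf0le (by linarith)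
  obtain ⟨hv, hx⟩ := hnorm t ht
  exact ⟨by linarith, by linarith⟩

end KeyEst


theorem stmt11 (φ : H → EReal) (ψ : H → ℝ) (ψ' : H → H) (hst : Standing φ ψ ψ')
    (Lψ : ℝ) (hLψ : 0 ≤ Lψ)
    (hlip : ∀ a b : H, ‖ψ' a - ψ' b‖ ≤ Lψ * ‖a - b‖)
    (lam lam' : ℝ → ℝ) (T c₀ : ℝ) (hT : 0 < T) (hc₀ : 0 < c₀)
    (hlam : ∀ t ∈ Set.Icc (0:ℝ) T, c₀ ≤ lam t)
    (hlamint : IntegrableOn lam' (Set.Icc 0 T))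
    (hlamrep : ∀ t ∈ Set.Icc (0:ℝ) T, lam t = lam 0 + ∫ s in (0:ℝ)..t, lam' s)
    (x₀n v₀n : ℕ → H) (x₀ v₀ : H)
    (hv₀n : ∀ n, IsSubdiff φ (x₀n n) (v₀n n)) (hv₀ : IsSubdiff φ x₀ v₀)
    (xn vn xn' vn' : ℕ → ℝ → H) (x v x' v' : ℝ → H)
    (soln : ∀ n, StrongSol φ ψ' lam T (xn n) (vn n) (xn' n) (vn' n))
    (hxn0 : ∀ n, xn n 0 = x₀n n) (hvn0 : ∀ n, vn n 0 = v₀n n)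
    (sol : StrongSol φ ψ' lam T x v x' v')
    (hx0 : x 0 = x₀) (hv0 : v 0 = v₀)
    (hconv : Tendsto (fun n => (x₀n n, v₀n n)) atTop (𝓝 (x₀, v₀))) :
    TendstoUniformlyOn (fun n t => (xn n t, vn n t)) (fun t => (x t, v t)) atTop
      (Set.Icc (0:ℝ) T) := by
  obtain ⟨⟨hbot, htop, _, _⟩, _, _, _⟩ := hst
  have hk0 : ∀ s, 0 ≤ |lam' s| / c₀ + 1 + Lψ / c₀ := fun s => by positivity
  have hkint : IntegrableOn (fun s => |lam' s| / c₀ + 1 + Lψ / c₀) (Set.Icc 0 T) := by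
    apply Integrable.add
    apply Integrable.add
    · exact hlamint.abs.div_const c₀
    · exact integrableOn_const measure_Icc_lt_top.ne
    · exact integrableOn_const measure_Icc_lt_top.ne
  obtain ⟨C, hC1, hgr⟩ := gronwall_aux hT hkint hk0
  have hCpos : 0 < C := lt_of_lt_of_le one_pos hC1
  set D : ℕ → ℝ := fun n => lam 0 * ‖x₀n n - x₀‖ + ‖v₀n n - v₀‖ with hD
  have hkey : ∀ n, ∀ t ∈ Set.Icc (0:ℝ) T,
      c₀ * ‖xn n t - x t‖ ≤ C * D n ∧ ‖vn n t - v t‖ ≤ C * D n := by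
    intro n t ht
    have h := key_est hbot htop hLψ hlip hT hc₀ hlam hlamint hlamrep
      (soln n) sol hC1 hgr t ht
    rwa [hxn0 n, hvn0 n, hx0, hv0] at h
  -- convergence of initial data
  have hx₀conv : Tendsto (fun n => x₀n n) atTop (𝓝 x₀) :=
    (continuous_fst.tendsto (x₀, v₀)).comp hconv
  have hv₀conv : Tendsto (fun n => v₀n n) atTop (𝓝 v₀) :=
    (continuous_snd.tendsto (x₀, v₀)).comp hconv
  have hxn0' : Tendsto (fun n => ‖x₀n n - x₀‖) atTop (𝓝 0) :=
    tendsto_iff_norm_sub_tendsto_zero.1 hx₀conv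
  have hvn0' : Tendsto (fun n => ‖v₀n n - v₀‖) atTop (𝓝 0) :=
    tendsto_iff_norm_sub_tendsto_zero.1 hv₀conv
  have hDconv : Tendsto D atTop (𝓝 0) := by
    have := (hxn0'.const_mul (lam 0)).add hvn0'
    simpa using this
  have hCDconv : Tendsto (fun n => C * D n) atTop (𝓝 0) := by
    have := hDconv.const_mul C
    simpa using this
  rw [Metric.tendstoUniformlyOn_iff]
  intro ε hε
  have hmin : (0:ℝ) < min (ε * c₀) ε := lt_min (by positivity) hε
  have hev : ∀ᶠ n in atTop, C * D n < min (ε * c₀) ε :=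
    hCDconv.eventually_lt_const hmin
  filter_upwards [hev] with n hn
  intro t ht
  obtain ⟨h1, h2⟩ := hkey n t ht
  have hn1 : C * D n < ε * c₀ := lt_of_lt_of_le hn (min_le_left _ _)
  have hn2 : C * D n < ε := lt_of_lt_of_le hn (min_le_right _ _)
  rw [Prod.dist_eq]
  apply max_lt
  · rw [dist_eq_norm]
    have : ‖x t - xn n t‖ = ‖xn n t - x t‖ := norm_sub_rev _ _
    rw [this]
    nlinarith
  · rw [dist_eq_norm]
    have : ‖v t - vn n t‖ = ‖vn n t - v t‖ := norm_sub_rev _ _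
    rw [this]
    linarith
end

section
/- (Chain rule for convex functions along trajectories) Let φ: H → ℝ∪{+∞} be proper convex lower semicontinuous, and let x ∈ H¹(0,T;H) (absolutely continuous with ẋ ∈ L²(0,T;H)) and v ∈ L²(0,T;H) continuous with v(t) ∈ ∂φ(x(t)) for almost every t ∈ [0,T]. Then t ↦ φ(x(t)) is absolutely continuous on [0,T] and d/dt φ(x(t)) = ⟨v(t), ẋ(t)⟩ for almost every t. -/
open MeasureTheory Set Filter
open scoped Topology

variable {H : Type*} [NormedAddCommGroup H] [InnerProductSpace ℝ H] [CompleteSpace H]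

/-- If the subdifferential of `φ` at `x` is nonempty and `φ` is proper, then `φ x` is finite. -/
lemma subdiff_finite (φ : H → EReal) (hφ : ProperConvexLSC φ) {x v : H}
    (h : IsSubdiff φ x v) : φ x ≠ ⊤ ∧ φ x ≠ ⊥ := by
  refine ⟨?_, hφ.1 x⟩
  obtain ⟨z, hz⟩ := hφ.2.1
  intro htop
  have := h z
  rw [htop, EReal.top_add_coe] at this
  exact hz (top_le_iff.mp this)

/-- Density argument: the subdifferential inclusion extends from a.e. `t ∈ (0,T)` to
all `t ∈ [0,T]`, using lower semicontinuity of `φ` and continuity of `x`, `v`. -/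
lemma subdiff_all (φ : H → EReal) (hφ : ProperConvexLSC φ) (T : ℝ) (hT : 0 < T)
    (x v : ℝ → H) (hxcont : ContinuousOn x (Set.Icc 0 T))
    (hvcont : ContinuousOn v (Set.Icc 0 T))
    (hsub : ∀ᵐ t ∂(volume.restrict (Set.Ioo 0 T)), IsSubdiff φ (x t) (v t)) :
    ∀ t ∈ Set.Icc (0:ℝ) T, IsSubdiff φ (x t) (v t) := by
  -- the good set
  set S : Set ℝ := Set.Ioo 0 T ∩ {t | IsSubdiff φ (x t) (v t)} with hS
  have hSsub : S ⊆ Set.Icc 0 T := fun s hs => Set.Ioo_subset_Icc_self hs.1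
  have hSgood : ∀ s ∈ S, IsSubdiff φ (x s) (v s) := fun s hs => hs.2
  -- every point of Icc is in the closure of S
  have hclos : ∀ t ∈ Set.Icc (0:ℝ) T, t ∈ closure S := by
    intro t ht
    rw [Metric.mem_closure_iff]
    intro ε hε
    set a := max 0 (t - ε) with ha
    set b := min T (t + ε) with hb
    have hab : a < b := by
      rw [ha, hb]
      apply max_lt <;> apply lt_min
      · exact hT
      · linarith [ht.1]
      · linarith [ht.2]
      · linarith
    have hJ : Set.Ioo a b ⊆ Set.Ioo 0 T := fun r hr =>
      ⟨lt_of_le_of_lt (le_max_left _ _) hr.1, lt_of_lt_of_le hr.2 (min_le_left _ _)⟩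
    -- Ioo a b has positive measure, and bad set has measure 0 in Ioo 0 T
    have hbad : volume ((Set.Ioo 0 T) \ {t | IsSubdiff φ (x t) (v t)}) = 0 := by
      rw [ae_restrict_iff'₀ measurableSet_Ioo.nullMeasurableSet] at hsub
      exact measure_eq_zero_iff_ae_notMem.mpr (by
        filter_upwards [hsub] with r hr
        intro hmem
        exact hmem.2 (hr hmem.1))
    have hpos : 0 < volume (Set.Ioo a b) := by
      rw [Real.volume_Ioo]
      exact ENNReal.ofReal_pos.mpr (by linarith)
    have : (Set.Ioo a b ∩ S).Nonempty := by
      by_contra hemp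
      rw [Set.not_nonempty_iff_eq_empty] at hemp
      have hsubbad : Set.Ioo a b ⊆ (Set.Ioo 0 T) \ {t | IsSubdiff φ (x t) (v t)} := by
        intro r hr
        refine ⟨hJ hr, fun hgood => ?_⟩
        exact Set.eq_empty_iff_forall_notMem.mp hemp r ⟨hr, hJ hr, hgood⟩
      exact absurd (measure_mono_null hsubbad hbad) (ne_of_gt hpos)
    obtain ⟨s, hs1, hs2⟩ := this
    refine ⟨s, hs2, ?_⟩
    rw [Real.dist_eq, abs_sub_lt_iff]
    constructor
    · have : a ≥ t - ε := le_max_right _ _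
      linarith [hs1.1]
    · have : b ≤ t + ε := min_le_right _ _
      linarith [hs1.2]
  -- now pass to the limit
  intro t ht y
  by_contra hcon
  push_neg at hcon
  have hytop : φ y ≠ ⊤ := fun h => by rw [h] at hcon; exact absurd hcon (not_lt_of_ge le_top)
  have hybot : φ y ≠ ⊥ := hφ.1 y
  set r := (φ y).toReal with hr
  have hyr : φ y = (r : EReal) := (EReal.coe_toReal hytop hybot).symm
  set c : ℝ := (inner ℝ (v t) (y - x t) : ℝ) with hc
  -- φ (x t) > r - c
  have hgt : ((r - c : ℝ) : EReal) < φ (x t) := by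
    by_contra hle
    push_neg at hle
    have : φ (x t) + (c : EReal) ≤ ((r - c : ℝ) : EReal) + (c : EReal) :=
      add_le_add_left hle _
    rw [← EReal.coe_add] at this
    simp only [sub_add_cancel] at this
    rw [hyr] at hcon
    exact absurd (le_trans this (le_refl _)) (not_le_of_gt hcon)
  obtain ⟨b, hb1, hb2⟩ := EReal.exists_between_coe_real hgt
  -- lsc of φ at x t
  have hlsc := hφ.2.2.1 (x t) (b : EReal) hb2
  -- the filter 𝓝[S] t is nontrivial
  have hne : (𝓝[S] t).NeBot := mem_closure_iff_nhdsWithin_neBot.mp (hclos t ht)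
  -- x and v tend to x t, v t along 𝓝[S] t
  have hxt : Tendsto x (𝓝[S] t) (𝓝 (x t)) :=
    ((hxcont t ht).mono hSsub).tendsto
  have hvt : Tendsto v (𝓝[S] t) (𝓝 (v t)) :=
    ((hvcont t ht).mono hSsub).tendsto
  -- eventually b < φ (x s)
  have hev1 : ∀ᶠ s in 𝓝[S] t, (b : EReal) < φ (x s) := hxt.eventually hlsc
  -- c s := ⟪v s, y - x s⟫ tends to c
  have hct : Tendsto (fun s => (inner ℝ (v s) (y - x s) : ℝ)) (𝓝[S] t) (𝓝 c) := by
    have : Continuous (fun p : H × H => (inner ℝ p.1 p.2 : ℝ)) := continuous_inner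
    exact (this.tendsto _).comp (hvt.prodMk_nhds (tendsto_const_nhds.sub hxt))
  -- eventually r - c s < b
  have hev2 : ∀ᶠ s in 𝓝[S] t, r - (inner ℝ (v s) (y - x s) : ℝ) < b := by
    have : Tendsto (fun s => r - (inner ℝ (v s) (y - x s) : ℝ)) (𝓝[S] t) (𝓝 (r - c)) :=
      tendsto_const_nhds.sub hct
    have hbc : r - c < b := by exact_mod_cast hb1
    exact this.eventually_lt_const hbc
  -- eventually s ∈ S
  have hev3 : ∀ᶠ s in 𝓝[S] t, s ∈ S := eventually_mem_nhdsWithin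
  -- contradiction
  have hfalse : ∀ᶠ s in 𝓝[S] t, False := by
    filter_upwards [hev1, hev2, hev3] with s h1 h2 h3
    -- at s ∈ S: φ (x s) finite, and h s + c s ≤ r
    obtain ⟨hfin1, hfin2⟩ := subdiff_finite φ hφ (hSgood s h3)
    have hsub_s := hSgood s h3 y
    rw [← EReal.coe_toReal hfin1 hfin2, ← EReal.coe_add, hyr] at hsub_s
    have hreal : (φ (x s)).toReal + (inner ℝ (v s) (y - x s) : ℝ) ≤ r :=
      EReal.coe_le_coe_iff.mp hsub_s
    rw [← EReal.coe_toReal hfin1 hfin2] at h1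
    have hb' : b < (φ (x s)).toReal := EReal.coe_lt_coe_iff.mp h1
    linarith
  haveI := hne
  obtain ⟨s, hs⟩ := hfalse.exists
  exact hs

lemma II_of_Icc {E : Type*} [NormedAddCommGroup E] {f : ℝ → E} {T a b : ℝ}
    (hf : IntegrableOn f (Set.Icc 0 T)) (ha : a ∈ Set.Icc (0:ℝ) T) (hb : b ∈ Set.Icc (0:ℝ) T) :
    IntervalIntegrable f volume a b := by
  rw [intervalIntegrable_iff]
  apply hf.mono_set
  intro r hr
  rw [Set.uIoc] at hr
  exact ⟨le_trans (le_min ha.1 hb.1) (le_of_lt hr.1), le_trans hr.2 (max_le ha.2 hb.2)⟩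

lemma key_ineq (φ : H → EReal) (hφ : ProperConvexLSC φ) (T : ℝ)
    (x x' v : ℝ → H)
    (hxrep : ∀ t ∈ Set.Icc (0:ℝ) T, x t = x 0 + ∫ s in (0:ℝ)..t, x' s)
    (hx'int : IntegrableOn x' (Set.Icc 0 T))
    (hsuball : ∀ t ∈ Set.Icc (0:ℝ) T, IsSubdiff φ (x t) (v t))
    (hwint : IntegrableOn (fun r => (inner ℝ (v r) (x' r) : ℝ)) (Set.Icc 0 T))
    {s t ε δ : ℝ} (hs : 0 ≤ s) (hst : s ≤ t) (htT : t ≤ T) (hε : 0 ≤ ε)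
    (hmod : ∀ a ∈ Set.Icc (0:ℝ) T, ∀ b ∈ Set.Icc (0:ℝ) T, |a - b| ≤ δ → ‖v a - v b‖ ≤ ε)
    (hδ : t - s ≤ δ) :
    |(φ (x t)).toReal - (φ (x s)).toReal - ∫ r in s..t, (inner ℝ (v r) (x' r) : ℝ)|
      ≤ ε * ∫ r in s..t, ‖x' r‖ := by
  have hsmem : s ∈ Set.Icc (0:ℝ) T := ⟨hs, le_trans hst htT⟩
  have htmem : t ∈ Set.Icc (0:ℝ) T := ⟨le_trans hs hst, htT⟩
  have h0mem : (0:ℝ) ∈ Set.Icc (0:ℝ) T := ⟨le_refl _, le_trans hs (le_trans hst htT)⟩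
  obtain ⟨hft, hfb⟩ := subdiff_finite φ hφ (hsuball t htmem)
  obtain ⟨hfs, hfs'⟩ := subdiff_finite φ hφ (hsuball s hsmem)
  set ht' : ℝ := (φ (x t)).toReal with hht
  set hs' : ℝ := (φ (x s)).toReal with hhs
  -- real subdifferential inequalities
  have h_lo : (inner ℝ (v s) (x t - x s) : ℝ) ≤ ht' - hs' := by
    have := hsuball s hsmem (x t)
    rw [← EReal.coe_toReal hfs hfs', ← EReal.coe_add, ← EReal.coe_toReal hft hfb] at this
    have := EReal.coe_le_coe_iff.mp this
    linarith
  have h_up : ht' - hs' ≤ (inner ℝ (v t) (x t - x s) : ℝ) := by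
    have := hsuball t htmem (x s)
    rw [← EReal.coe_toReal hft hfb, ← EReal.coe_add, ← EReal.coe_toReal hfs hfs'] at this
    have h2 := EReal.coe_le_coe_iff.mp this
    have : (inner ℝ (v t) (x s - x t) : ℝ) = -(inner ℝ (v t) (x t - x s) : ℝ) := by
      rw [← inner_neg_right]; congr 1; abel
    linarith [h2, this ▸ h2]
  -- x t - x s = ∫ s..t x'
  have hii : ∀ a b, a ∈ Set.Icc (0:ℝ) T → b ∈ Set.Icc (0:ℝ) T →
      IntervalIntegrable x' volume a b := fun a b ha hb => II_of_Icc hx'int ha hb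
  have hxdiff : x t - x s = ∫ r in s..t, x' r := by
    rw [hxrep t htmem, hxrep s hsmem]
    rw [add_sub_add_left_eq_sub]
    exact intervalIntegral.integral_interval_sub_left (hii 0 t h0mem htmem)
      (hii 0 s h0mem hsmem)
  -- inner with a fixed vector commutes with the interval integral
  have hinner_int : ∀ u : H, (inner ℝ u (x t - x s) : ℝ) = ∫ r in s..t, (inner ℝ u (x' r) : ℝ) := by
    intro u
    rw [hxdiff]
    exact ((innerSL ℝ u).intervalIntegral_comp_comm (hii s t hsmem htmem)).symm
  -- integrability of the various integrands on [s,t]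
  have hIw : IntervalIntegrable (fun r => (inner ℝ (v r) (x' r) : ℝ)) volume s t :=
    II_of_Icc hwint hsmem htmem
  have hIu : ∀ u : H, IntervalIntegrable (fun r => (inner ℝ u (x' r) : ℝ)) volume s t := by
    intro u
    rw [intervalIntegrable_iff] at *
    exact ((innerSL ℝ u).integrable_comp (hii s t hsmem htmem).def').congr (by
      filter_upwards with r; rfl)
  have hIn : IntervalIntegrable (fun r => ε * ‖x' r‖) volume s t :=
    ((hii s t hsmem htmem).norm).const_mul ε
  -- pointwise bounds
  have hbound : ∀ u, u ∈ Set.Icc (0:ℝ) T → (∀ r ∈ Set.Icc s t, |u - r| ≤ δ) →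
      ∀ r ∈ Set.Icc s t, |(inner ℝ (v u) (x' r) : ℝ) - (inner ℝ (v r) (x' r) : ℝ)| ≤ ε * ‖x' r‖ := by
    intro u hu hdist r hr
    have hr' : r ∈ Set.Icc (0:ℝ) T := ⟨le_trans hs hr.1, le_trans hr.2 htT⟩
    have : (inner ℝ (v u) (x' r) : ℝ) - (inner ℝ (v r) (x' r) : ℝ) = (inner ℝ (v u - v r) (x' r) : ℝ) := by
      rw [inner_sub_left]
    rw [this]
    calc |(inner ℝ (v u - v r) (x' r) : ℝ)| ≤ ‖v u - v r‖ * ‖x' r‖ := by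
          rw [← Real.norm_eq_abs]; exact norm_inner_le_norm _ _
      _ ≤ ε * ‖x' r‖ := by
          apply mul_le_mul_of_nonneg_right (hmod u hu r hr' (hdist r hr)) (norm_nonneg _)
  -- upper estimate
  have hup2 : ht' - hs' - (∫ r in s..t, (inner ℝ (v r) (x' r) : ℝ)) ≤ ε * ∫ r in s..t, ‖x' r‖ := by
    have h1 : ht' - hs' - (∫ r in s..t, (inner ℝ (v r) (x' r) : ℝ)) ≤
        ∫ r in s..t, ((inner ℝ (v t) (x' r) : ℝ) - (inner ℝ (v r) (x' r) : ℝ)) := by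
      rw [intervalIntegral.integral_sub (hIu (v t)) hIw]
      have := hinner_int (v t)
      linarith [h_up]
    refine le_trans h1 ?_
    rw [← intervalIntegral.integral_const_mul]
    apply intervalIntegral.integral_mono_on hst ((hIu (v t)).sub hIw) (hIn.congr ?_)
    · intro r hr
      have := hbound t htmem (fun r hr => by rw [abs_sub_comm]; rw [abs_le]; constructor <;>
        [linarith [hr.1, hr.2]; linarith [hr.1, hr.2]]) r hr
      calc (inner ℝ (v t) (x' r) : ℝ) - (inner ℝ (v r) (x' r) : ℝ)
          ≤ |(inner ℝ (v t) (x' r) : ℝ) - (inner ℝ (v r) (x' r) : ℝ)| := le_abs_self _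
        _ ≤ ε * ‖x' r‖ := this
    · exact fun r _ => rfl
  -- lower estimate
  have hlo2 : -(ε * ∫ r in s..t, ‖x' r‖) ≤ ht' - hs' - (∫ r in s..t, (inner ℝ (v r) (x' r) : ℝ)) := by
    have h1 : ∫ r in s..t, ((inner ℝ (v s) (x' r) : ℝ) - (inner ℝ (v r) (x' r) : ℝ)) ≤
        ht' - hs' - (∫ r in s..t, (inner ℝ (v r) (x' r) : ℝ)) := by
      rw [intervalIntegral.integral_sub (hIu (v s)) hIw]
      have := hinner_int (v s)
      linarith [h_lo]
    refine le_trans ?_ h1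
    rw [← intervalIntegral.integral_const_mul, ← intervalIntegral.integral_neg]
    apply intervalIntegral.integral_mono_on hst ((hIn.congr ?_).neg) ((hIu (v s)).sub hIw)
    · intro r hr
      have := hbound s hsmem (fun r hr => by rw [abs_le]; constructor <;>
        [linarith [hr.1, hr.2]; linarith [hr.1, hr.2]]) r hr
      have h3 := neg_abs_le ((inner ℝ (v s) (x' r) : ℝ) - (inner ℝ (v r) (x' r) : ℝ))
      simp only [Pi.neg_apply]
      linarith [this]
    · exact fun r _ => rfl
  rw [abs_le]
  exact ⟨hlo2, hup2⟩

lemma chain_identity (φ : H → EReal) (hφ : ProperConvexLSC φ) (T : ℝ) (hT : 0 < T)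
    (x x' v : ℝ → H)
    (hxrep : ∀ t ∈ Set.Icc (0:ℝ) T, x t = x 0 + ∫ s in (0:ℝ)..t, x' s)
    (hx'int : IntegrableOn x' (Set.Icc 0 T))
    (hvcont : ContinuousOn v (Set.Icc 0 T))
    (hsuball : ∀ t ∈ Set.Icc (0:ℝ) T, IsSubdiff φ (x t) (v t))
    (hwint : IntegrableOn (fun r => (inner ℝ (v r) (x' r) : ℝ)) (Set.Icc 0 T)) :
    ∀ t ∈ Set.Icc (0:ℝ) T,
      (φ (x t)).toReal = (φ (x 0)).toReal + ∫ r in (0:ℝ)..t, (inner ℝ (v r) (x' r) : ℝ) := by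
  -- a quantitative uniform continuity statement for v
  have hucont : ∀ ε : ℝ, 0 < ε → ∃ δ : ℝ, 0 < δ ∧
      ∀ a ∈ Set.Icc (0:ℝ) T, ∀ b ∈ Set.Icc (0:ℝ) T, |a - b| ≤ δ → ‖v a - v b‖ ≤ ε := by
    intro ε hε
    have := isCompact_Icc.uniformContinuousOn_of_continuous hvcont
    rw [Metric.uniformContinuousOn_iff] at this
    obtain ⟨δ, hδ, hδ'⟩ := this ε hε
    refine ⟨δ/2, by linarith, fun a ha b hb hab => ?_⟩
    have : dist a b < δ := by rw [Real.dist_eq]; linarith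
    have := hδ' a ha b hb this
    rw [dist_eq_norm] at this
    exact le_of_lt this
  intro t ht
  set D : ℝ := (φ (x t)).toReal - (φ (x 0)).toReal -
    ∫ r in (0:ℝ)..t, (inner ℝ (v r) (x' r) : ℝ) with hD
  set C : ℝ := ∫ r in (0:ℝ)..t, ‖x' r‖ with hC
  have h0mem : (0:ℝ) ∈ Set.Icc (0:ℝ) T := ⟨le_refl _, le_of_lt hT⟩
  have hC0 : 0 ≤ C := intervalIntegral.integral_nonneg ht.1 (fun r _ => norm_nonneg _)
  -- the key estimate for every ε > 0
  have key : ∀ ε : ℝ, 0 < ε → |D| ≤ ε * C := by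
    intro ε hε
    obtain ⟨δ, hδpos, hmod⟩ := hucont ε hε
    obtain ⟨n, hn⟩ := exists_nat_ge (t / δ)
    set N : ℕ := n + 1 with hN
    have hNpos : (0:ℝ) < N := by positivity
    set c : ℝ := t / N with hc
    have hc0 : 0 ≤ c := div_nonneg ht.1 (le_of_lt hNpos)
    have hcδ : c ≤ δ := by
      rw [hc, div_le_iff₀ hNpos]
      have : t / δ ≤ (n : ℝ) := hn
      rw [div_le_iff₀ hδpos] at this
      have : (n:ℝ) ≤ (N:ℝ) := by rw [hN]; push_cast; linarith
      nlinarith [hn, (div_le_iff₀ hδpos).mp hn]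
    set p : ℕ → ℝ := fun i => i * c with hp
    have hpN : p N = t := by
      rw [hp]; simp only [hc]; field_simp
    have hpmem : ∀ i : ℕ, i ≤ N → p i ∈ Set.Icc (0:ℝ) T := by
      intro i hi
      constructor
      · exact mul_nonneg (Nat.cast_nonneg _) hc0
      · have : p i ≤ p N := by
          apply mul_le_mul_of_nonneg_right _ hc0
          exact_mod_cast hi
        rw [hpN] at this
        exact le_trans this ht.2
    have hpmono : ∀ i : ℕ, p i ≤ p (i + 1) := by
      intro i
      apply mul_le_mul_of_nonneg_right _ hc0
      push_cast; linarith
    have hpdiff : ∀ i : ℕ, p (i + 1) - p i = c := by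
      intro i; rw [hp]; push_cast; ring
    set Φ : ℕ → ℝ := fun i => (φ (x (p i))).toReal -
      ∫ r in (0:ℝ)..(p i), (inner ℝ (v r) (x' r) : ℝ) with hΦ
    set Ψ : ℕ → ℝ := fun i => ∫ r in (0:ℝ)..(p i), ‖x' r‖ with hΨ
    have hp0 : p 0 = 0 := by rw [hp]; simp
    have hDΦ : D = Φ N - Φ 0 := by
      rw [hΦ]; simp only [hpN, hp0]
      rw [intervalIntegral.integral_same]
      ring
    have hCΨ : C = Ψ N - Ψ 0 := by
      rw [hΨ]; simp only [hpN, hp0]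
      rw [intervalIntegral.integral_same]
      ring
    have hsum : Φ N - Φ 0 = ∑ i ∈ Finset.range N, (Φ (i+1) - Φ i) :=
      (Finset.sum_range_sub Φ N).symm
    have hsumΨ : Ψ N - Ψ 0 = ∑ i ∈ Finset.range N, (Ψ (i+1) - Ψ i) :=
      (Finset.sum_range_sub Ψ N).symm
    have hstep : ∀ i ∈ Finset.range N, |Φ (i+1) - Φ i| ≤ ε * (Ψ (i+1) - Ψ i) := by
      intro i hi
      rw [Finset.mem_range] at hi
      have hi1 : i + 1 ≤ N := hi
      have him : p i ∈ Set.Icc (0:ℝ) T := hpmem i (le_of_lt hi)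
      have him1 : p (i+1) ∈ Set.Icc (0:ℝ) T := hpmem (i+1) hi1
      have hii : ∀ a b, a ∈ Set.Icc (0:ℝ) T → b ∈ Set.Icc (0:ℝ) T →
          IntervalIntegrable x' volume a b := fun a b ha hb => II_of_Icc hx'int ha hb
      have hΦdiff : Φ (i+1) - Φ i = (φ (x (p (i+1)))).toReal - (φ (x (p i))).toReal -
          ∫ r in (p i)..(p (i+1)), (inner ℝ (v r) (x' r) : ℝ) := by
        rw [hΦ]
        have := intervalIntegral.integral_interval_sub_left
          (II_of_Icc hwint h0mem him1) (II_of_Icc hwint h0mem him)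
        simp only []
        rw [← this]; ring
      have hΨdiff : Ψ (i+1) - Ψ i = ∫ r in (p i)..(p (i+1)), ‖x' r‖ := by
        rw [hΨ]
        have := intervalIntegral.integral_interval_sub_left
          ((hii 0 (p (i+1)) h0mem him1).norm) ((hii 0 (p i) h0mem him).norm)
        simp only []
        rw [← this]
      rw [hΦdiff, hΨdiff]
      apply key_ineq φ hφ T x x' v hxrep hx'int hsuball hwint him.1 (hpmono i) him1.2
        (le_of_lt hε) hmod
      rw [hpdiff]; exact hcδ
    calc |D| = |∑ i ∈ Finset.range N, (Φ (i+1) - Φ i)| := by rw [hDΦ, hsum]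
      _ ≤ ∑ i ∈ Finset.range N, |Φ (i+1) - Φ i| := Finset.abs_sum_le_sum_abs _ _
      _ ≤ ∑ i ∈ Finset.range N, ε * (Ψ (i+1) - Ψ i) := Finset.sum_le_sum hstep
      _ = ε * (Ψ N - Ψ 0) := by rw [← Finset.mul_sum, ← hsumΨ]
      _ = ε * C := by rw [hCΨ]
  -- conclude D = 0
  have hD0 : |D| ≤ 0 := by
    apply le_of_forall_pos_le_add
    intro η hη
    have := key (η / (C + 1)) (by positivity)
    have h2 : η / (C + 1) * C ≤ η := by
      rw [div_mul_eq_mul_div, div_le_iff₀ (by linarith)]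
      nlinarith
    linarith
  have : D = 0 := abs_nonpos_iff.mp hD0
  rw [hD] at this
  linarith [this]

theorem stmt18 (φ : H → EReal) (hφ : ProperConvexLSC φ)
    (T : ℝ) (hT : 0 < T) (x x' v : ℝ → H)
    (hxrep : ∀ t ∈ Set.Icc (0:ℝ) T, x t = x 0 + ∫ s in (0:ℝ)..t, x' s)
    (hxderiv : ∀ᵐ t ∂(volume.restrict (Set.Ioo 0 T)), HasDerivAt x (x' t) t)
    (hx'L2 : MemLp x' 2 (volume.restrict (Set.Ioo 0 T)))
    (hvcont : ContinuousOn v (Set.Icc 0 T))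
    (hvL2 : MemLp v 2 (volume.restrict (Set.Ioo 0 T)))
    (hsub : ∀ᵐ t ∂(volume.restrict (Set.Ioo 0 T)), IsSubdiff φ (x t) (v t)) :
    IntegrableOn (fun t => (inner ℝ (v t) (x' t) : ℝ)) (Set.Icc 0 T) ∧
    (∀ t ∈ Set.Icc (0:ℝ) T,
      (φ (x t)).toReal = (φ (x 0)).toReal + ∫ s in (0:ℝ)..t, (inner ℝ (v s) (x' s) : ℝ)) ∧
    ∀ᵐ t ∂(volume.restrict (Set.Ioo 0 T)),
      HasDerivAt (fun s => (φ (x s)).toReal) ((inner ℝ (v t) (x' t) : ℝ)) t := by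
  have hrestr : volume.restrict (Set.Ioo (0:ℝ) T) = volume.restrict (Set.Icc 0 T) :=
    Measure.restrict_congr_set Ioo_ae_eq_Icc
  haveI hfin : IsFiniteMeasure (volume.restrict (Set.Icc (0:ℝ) T)) :=
    ⟨by rw [Measure.restrict_apply_univ, Real.volume_Icc]; exact ENNReal.ofReal_lt_top⟩
  have hx'int : IntegrableOn x' (Set.Icc 0 T) := by
    rw [hrestr] at hx'L2
    exact hx'L2.integrable one_le_two
  have h0mem : (0:ℝ) ∈ Set.Icc (0:ℝ) T := ⟨le_refl _, le_of_lt hT⟩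
  have hTmem : T ∈ Set.Icc (0:ℝ) T := ⟨le_of_lt hT, le_refl _⟩
  -- continuity of x on [0, T]
  have hxcont : ContinuousOn x (Set.Icc 0 T) := by
    have hprim : ContinuousOn (fun b => ∫ r in (0:ℝ)..b, x' r) (Set.Icc 0 T) := by
      have h1 := intervalIntegral.continuousOn_primitive_interval' (II_of_Icc hx'int h0mem hTmem)
        (a := 0) (by rw [Set.uIcc_of_le (le_of_lt hT)]; exact h0mem)
      rwa [Set.uIcc_of_le (le_of_lt hT)] at h1
    exact (continuousOn_const.add hprim).congr (fun t ht => hxrep t ht)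
  -- the subdifferential inclusion everywhere on [0, T]
  have hsuball : ∀ t ∈ Set.Icc (0:ℝ) T, IsSubdiff φ (x t) (v t) :=
    subdiff_all φ hφ T hT x v hxcont hvcont hsub
  -- integrability of the inner product
  obtain ⟨M, hM⟩ := isCompact_Icc.exists_bound_of_continuousOn hvcont
  have hwint : IntegrableOn (fun r => (inner ℝ (v r) (x' r) : ℝ)) (Set.Icc 0 T) := by
    have hg : IntegrableOn (fun r => M * ‖x' r‖) (Set.Icc 0 T) := (hx'int.norm).const_mul M
    apply hg.mono'
    · exact continuous_inner.comp_aestronglyMeasurable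
        ((hvcont.aestronglyMeasurable measurableSet_Icc).prodMk hx'int.aestronglyMeasurable)
    · filter_upwards [ae_restrict_mem measurableSet_Icc] with r hr
      rw [Real.norm_eq_abs]
      calc |(inner ℝ (v r) (x' r) : ℝ)| ≤ ‖v r‖ * ‖x' r‖ := by
            rw [← Real.norm_eq_abs]; exact norm_inner_le_norm _ _
        _ ≤ M * ‖x' r‖ := mul_le_mul_of_nonneg_right (hM r hr) (norm_nonneg _)
  refine ⟨hwint, chain_identity φ hφ T hT x x' v hxrep hx'int hvcont hsuball hwint, ?_⟩
  -- a.e. differentiability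
  filter_upwards [hxderiv, ae_restrict_mem measurableSet_Ioo] with t hx't htmem
  have htIcc : t ∈ Set.Icc (0:ℝ) T := Set.Ioo_subset_Icc_self htmem
  have hnhds : Set.Icc (0:ℝ) T ∈ 𝓝 t :=
    Filter.mem_of_superset (isOpen_Ioo.mem_nhds htmem) Set.Ioo_subset_Icc_self
  obtain ⟨hft, hfb⟩ := subdiff_finite φ hφ (hsuball t htIcc)
  rw [hasDerivAt_iff_tendsto_slope]
  set h : ℝ → ℝ := fun s => (φ (x s)).toReal with hh
  have hxslope : Tendsto (slope x t) (𝓝[≠] t) (𝓝 (x' t)) :=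
    hasDerivAt_iff_tendsto_slope.mp hx't
  have hvten : Tendsto v (𝓝[≠] t) (𝓝 (v t)) :=
    ((hvcont.continuousAt hnhds).tendsto).mono_left nhdsWithin_le_nhds
  have hA : Tendsto (fun s => (inner ℝ (v t) (slope x t s) : ℝ)) (𝓝[≠] t)
      (𝓝 (inner ℝ (v t) (x' t) : ℝ)) := by
    have hcont : Continuous (fun z : H => (inner ℝ (v t) z : ℝ)) := (innerSL ℝ (v t)).continuous
    exact (hcont.tendsto _).comp hxslope
  have hev : ∀ᶠ s in 𝓝[≠] t, s ∈ Set.Icc (0:ℝ) T :=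
    eventually_nhdsWithin_of_eventually_nhds (eventually_of_mem hnhds fun s hs => hs)
  have hdiff0 : Tendsto (fun s => slope h t s - (inner ℝ (v t) (slope x t s) : ℝ)) (𝓝[≠] t)
      (𝓝 0) := by
    apply squeeze_zero_norm' (a := fun s => ‖v s - v t‖ * ‖slope x t s‖)
    · filter_upwards [hev] with s hsIcc
      obtain ⟨hfs, hfs'⟩ := subdiff_finite φ hφ (hsuball s hsIcc)
      -- the two subdifferential inequalities
      have h_lo : (inner ℝ (v t) (x s - x t) : ℝ) ≤ h s - h t := by
        have := hsuball t htIcc (x s)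
        rw [← EReal.coe_toReal hft hfb, ← EReal.coe_add, ← EReal.coe_toReal hfs hfs'] at this
        have := EReal.coe_le_coe_iff.mp this
        simp only [hh]; linarith
      have h_up : h s - h t ≤ (inner ℝ (v s) (x s - x t) : ℝ) := by
        have := hsuball s hsIcc (x t)
        rw [← EReal.coe_toReal hfs hfs', ← EReal.coe_add, ← EReal.coe_toReal hft hfb] at this
        have h2 := EReal.coe_le_coe_iff.mp this
        have h3 : (inner ℝ (v s) (x t - x s) : ℝ) = -(inner ℝ (v s) (x s - x t) : ℝ) := by
          rw [← inner_neg_right]; congr 1; abel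
        simp only [hh]; rw [h3] at h2; linarith
      -- bound on D1
      have hD1b : |h s - h t - (inner ℝ (v t) (x s - x t) : ℝ)| ≤ ‖v s - v t‖ * ‖x s - x t‖ := by
        rw [abs_le]
        constructor
        · have := mul_nonneg (norm_nonneg (v s - v t)) (norm_nonneg (x s - x t))
          linarith
        · have h4 : (inner ℝ (v s) (x s - x t) : ℝ) - (inner ℝ (v t) (x s - x t) : ℝ)
              = (inner ℝ (v s - v t) (x s - x t) : ℝ) := by rw [inner_sub_left]
          have h5 : (inner ℝ (v s - v t) (x s - x t) : ℝ) ≤ ‖v s - v t‖ * ‖x s - x t‖ :=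
            real_inner_le_norm _ _
          linarith
      -- rewrite slopes
      rw [slope_def_module, slope_def_module, inner_smul_right, Real.norm_eq_abs, smul_eq_mul]
      have : (s - t)⁻¹ * (h s - h t) - (s - t)⁻¹ * (inner ℝ (v t) (x s - x t) : ℝ)
          = (s - t)⁻¹ * (h s - h t - (inner ℝ (v t) (x s - x t) : ℝ)) := by ring
      rw [this, abs_mul, norm_smul, Real.norm_eq_abs]
      calc |(s - t)⁻¹| * |h s - h t - (inner ℝ (v t) (x s - x t) : ℝ)|
          ≤ |(s - t)⁻¹| * (‖v s - v t‖ * ‖x s - x t‖) :=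
            mul_le_mul_of_nonneg_left hD1b (abs_nonneg _)
        _ = ‖v s - v t‖ * (|(s - t)⁻¹| * ‖x s - x t‖) := by ring
    · have h1 : Tendsto (fun s => ‖v s - v t‖) (𝓝[≠] t) (𝓝 0) := by
        have h0 : Tendsto (fun s => v s - v t) (𝓝[≠] t) (𝓝 (v t - v t)) :=
          hvten.sub tendsto_const_nhds
        rw [sub_self] at h0
        simpa using h0.norm
      have h2 : Tendsto (fun s => ‖slope x t s‖) (𝓝[≠] t) (𝓝 ‖x' t‖) := hxslope.norm
      have := h1.mul h2
      simpa using this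
  have := hdiff0.add hA
  rw [zero_add] at this
  apply this.congr
  intro s
  ring
end

section
/- (Integrated dual energy estimate) Let (x,v) be a strong solution on [0,T] of v ∈ ∂φ(x), λẋ + v̇ + v + ∇ψ(x) = 0 a.e., with λ ≥ c₀ > 0. Then for every t ∈ [0,T], ∫₀ᵗ ‖v̇(τ)‖² dτ + ‖v(t)‖² ≤ ‖v₀‖² + ∫₀ᵀ ‖∇ψ(x(τ))‖² dτ. -/
open MeasureTheory Set Filter
open scoped Topology

variable {H : Type*} [NormedAddCommGroup H] [InnerProductSpace ℝ H] [CompleteSpace H]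

section Aux
open Metric
open scoped RealInnerProductSpace
variable {H : Type*} [NormedAddCommGroup H] [InnerProductSpace ℝ H] [CompleteSpace H]

lemma grad_ineq {ψ : H → ℝ} {ψ' : H → H} (hcv : ConvexOn ℝ Set.univ ψ)
    (hg : ∀ z, HasGradientAt ψ (ψ' z) z) (z w : H) :
    ⟪ψ' z, w - z⟫ ≤ ψ w - ψ z := by
  have hline : HasDerivAt (fun τ : ℝ => z + τ • (w - z)) (w - z) 0 := by
    simpa using ((hasDerivAt_id (0:ℝ)).smul_const (w - z)).const_add z
  have hd : HasDerivAt (fun τ : ℝ => ψ (z + τ • (w - z))) ⟪ψ' z, w - z⟫ 0 := by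
    have h1 := (hg z).hasFDerivAt
    have h2 : HasFDerivAt ψ (InnerProductSpace.toDual ℝ H (ψ' z)) (z + (0:ℝ) • (w - z)) := by
      simpa using h1
    have := h2.comp_hasDerivAt 0 hline
    simp only [InnerProductSpace.toDual_apply_apply] at this
    exact this
  have hslope := hasDerivAt_iff_tendsto_slope.mp hd
  have hslope' : Tendsto (slope (fun τ : ℝ => ψ (z + τ • (w - z))) 0) (𝓝[>] 0)
      (𝓝 ⟪ψ' z, w - z⟫) :=
    hslope.mono_left (nhdsWithin_mono 0 (fun τ hτ => ne_of_gt hτ))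
  refine le_of_tendsto hslope' ?_
  filter_upwards [Ioc_mem_nhdsGT_of_mem (Set.left_mem_Ico.mpr zero_lt_one)] with τ hτ
  obtain ⟨hτ0, hτ1⟩ := hτ
  have hcomb : ψ (z + τ • (w - z)) ≤ (1 - τ) * ψ z + τ * ψ w := by
    have h := hcv.2 (Set.mem_univ z) (Set.mem_univ w) (by linarith : (0:ℝ) ≤ 1 - τ)
      (le_of_lt hτ0) (by ring)
    have : (1 - τ) • z + τ • w = z + τ • (w - z) := by
      rw [smul_sub, sub_smul, one_smul]; abel
    rwa [this] at h
  rw [slope_def_field]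
  have h0 : ψ (z + (0:ℝ) • (w - z)) = ψ z := by simp
  rw [h0, sub_zero, div_le_iff₀ hτ0]
  nlinarith [hcomb]

lemma grad_cont {ψ : H → ℝ} {ψ' : H → H} (hcv : ConvexOn ℝ Set.univ ψ)
    (hg : ∀ z, HasGradientAt ψ (ψ' z) z) : Continuous ψ' := by
  have hψc : Continuous ψ := by
    apply continuous_iff_continuousAt.mpr
    exact fun p => (hg p).hasFDerivAt.continuousAt
  rw [continuous_iff_continuousAt]
  intro p
  rw [Metric.continuousAt_iff]
  intro ε hε
  -- bounded image on a ball around p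
  obtain ⟨r, hr, hball⟩ : ∃ r > 0, ∀ y ∈ ball p r, |ψ y - ψ p| < 1 := by
    have := Metric.continuousAt_iff.mp (hψc.continuousAt (x := p)) (ε := 1) one_pos
    obtain ⟨δ, hδ, h⟩ := this
    exact ⟨δ, hδ, fun y hy => by simpa [Real.dist_eq] using h hy⟩
  have hbd : Bornology.IsBounded (ψ '' ball p r) := by
    apply Bornology.IsBounded.subset (Metric.isBounded_ball (x := ψ p) (r := 1))
    rintro - ⟨y, hy, rfl⟩
    simpa [Real.dist_eq] using hball y hy
  obtain ⟨K, hK⟩ := (hcv.subset (Set.subset_univ _) (convex_ball p r)).exists_lipschitzOnWith_of_isBounded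
    (half_lt_self hr) hbd
  set L : ℝ := (K : ℝ) with hLdef
  have hL0 : 0 ≤ L := K.coe_nonneg
  -- little-o at p
  have hlo := hasFDerivAt_iff_isLittleO_nhds_zero.mp (hg p).hasFDerivAt
  have hev := hlo.def (show (0:ℝ) < ε/4 by linarith)
  rw [Metric.eventually_nhds_iff] at hev
  obtain ⟨δ₀, hδ₀, hsm⟩ := hev
  set δ : ℝ := min (δ₀/2) (r/8) with hδdef
  have hδpos : 0 < δ := lt_min (by linarith) (by linarith)
  -- choose δ'
  set δ' : ℝ := min δ (ε * δ / (4 * (2 * L + 1))) with hδ'def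
  have hδ'pos : 0 < δ' := lt_min hδpos (by positivity)
  refine ⟨δ', hδ'pos, fun {y} hy => ?_⟩
  rw [dist_eq_norm] at hy ⊢
  -- main estimate: for all h with ‖h‖ = δ, ⟪ψ' y - ψ' p, h⟫ ≤ 2L‖y-p‖ + (ε/4)δ
  have key : ∀ h : H, ‖h‖ = δ → ⟪ψ' y - ψ' p, h⟫ ≤ 2 * L * ‖y - p‖ + (ε/4) * δ := by
    intro h hh
    have hyp : ‖y - p‖ < δ := lt_of_lt_of_le hy (min_le_left _ _)
    have hLip : ∀ a b : H, a ∈ ball p (r/2) → b ∈ ball p (r/2) → ψ a - ψ b ≤ L * ‖a - b‖ := by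
      intro a b ha hb
      have h := hK.dist_le_mul a ha b hb
      rw [Real.dist_eq, dist_eq_norm] at h
      have := le_abs_self (ψ a - ψ b)
      have := (abs_le.mp h).2
      linarith
    have hyb : y ∈ ball p (r/2) := by
      rw [mem_ball, dist_eq_norm]
      have : δ ≤ r/8 := min_le_right _ _
      linarith
    have hyh : y + h ∈ ball p (r/2) := by
      rw [mem_ball, dist_eq_norm]
      have h1 : ‖y + h - p‖ ≤ ‖y - p‖ + ‖h‖ := by
        calc ‖y + h - p‖ = ‖(y - p) + h‖ := by rw [add_sub_right_comm]
        _ ≤ ‖y - p‖ + ‖h‖ := norm_add_le _ _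
      have : δ ≤ r/8 := min_le_right _ _
      linarith [hh ▸ h1]
    have hph : p + h ∈ ball p (r/2) := by
      rw [mem_ball, dist_eq_norm]
      have : δ ≤ r/8 := min_le_right _ _
      simp only [add_sub_cancel_left]
      linarith [hh]
    -- (1) gradient inequality at y
    have h1 : ⟪ψ' y, h⟫ ≤ ψ (y + h) - ψ y := by
      have := grad_ineq hcv hg y (y + h)
      simpa using this
    -- (2),(3) Lipschitz
    have h2 : ψ (y + h) - ψ (p + h) ≤ L * ‖y - p‖ := by
      have := hLip (y + h) (p + h) hyh hph
      have e : y + h - (p + h) = y - p := by abel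
      rwa [e] at this
    have h3 : ψ p - ψ y ≤ L * ‖y - p‖ := by
      have := hLip p y (mem_ball_self (by linarith : (0:ℝ) < r/2)) hyb
      rwa [norm_sub_rev] at this
    -- (4) little-o at p
    have h4 : ψ (p + h) - ψ p - ⟪ψ' p, h⟫ ≤ (ε/4) * δ := by
      have hhδ : ‖h‖ < δ₀ := by
        rw [hh]; exact lt_of_le_of_lt (min_le_left _ _) (by linarith)
      have := hsm (y := h) (by simpa [dist_eq_norm] using hhδ)
      simp only [InnerProductSpace.toDual_apply_apply] at this
      have habs := le_trans (le_abs_self _) this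
      rw [hh] at habs
      linarith
    have expand : ⟪ψ' y - ψ' p, h⟫ = ⟪ψ' y, h⟫ - ⟪ψ' p, h⟫ := by
      rw [inner_sub_left]
    linarith
  -- conclude ‖ψ' y - ψ' p‖ ≤ (2L‖y-p‖)/δ + ε/4
  set w : H := ψ' y - ψ' p with hw
  have hnorm : ‖w‖ * δ ≤ 2 * L * ‖y - p‖ + (ε/4) * δ := by
    rcases eq_or_ne w 0 with h0 | h0
    · rw [h0]; simp; positivity
    · have hwpos : 0 < ‖w‖ := norm_pos_iff.mpr h0
      have := key ((δ / ‖w‖) • w) (by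
        rw [norm_smul, Real.norm_eq_abs, abs_of_pos (by positivity)]
        field_simp)
      have hinner : ⟪w, (δ / ‖w‖) • w⟫ = ‖w‖ * δ := by
        rw [real_inner_smul_right, real_inner_self_eq_norm_sq]
        field_simp
      rwa [hinner] at this
  have hyδ' : ‖y - p‖ ≤ ε * δ / (4 * (2 * L + 1)) := le_trans (le_of_lt hy) (min_le_right _ _)
  have h2L : 2 * L * ‖y - p‖ ≤ ε * δ / 2 := by
    have hstep : 2 * L * ‖y - p‖ ≤ 2 * L * (ε * δ / (4 * (2 * L + 1))) :=
      mul_le_mul_of_nonneg_left hyδ' (by positivity)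
    have heq : 2 * L * (ε * δ / (4 * (2 * L + 1))) = (ε * δ) * (2 * L / (4 * (2 * L + 1))) := by
      ring
    have hfrac : 2 * L / (4 * (2 * L + 1)) ≤ 1 / 2 := by
      rw [div_le_div_iff₀ (by positivity) two_pos]
      linarith
    have : (ε * δ) * (2 * L / (4 * (2 * L + 1))) ≤ (ε * δ) * (1 / 2) :=
      mul_le_mul_of_nonneg_left hfrac (by positivity)
    linarith
  have : ‖w‖ * δ ≤ ε * δ / 2 + (ε/4) * δ := by linarith
  have hfin : ‖w‖ ≤ 3 * ε / 4 :=
    le_of_mul_le_mul_right (by linarith : ‖w‖ * δ ≤ (3 * ε / 4) * δ) hδpos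
  linarith

lemma energy_identity {T : ℝ} (hT : 0 ≤ T) (w w' : ℝ → H)
    (hint : IntegrableOn w' (Icc 0 T))
    (hrep : ∀ s ∈ Icc (0:ℝ) T, w s = w 0 + ∫ u in (0:ℝ)..s, w' u) :
    ∀ t ∈ Icc (0:ℝ) T, ‖w t‖^2 = ‖w 0‖^2 + 2 * ∫ s in (0:ℝ)..t, ⟪w s, w' s⟫ := by
  have hwcont : ContinuousOn w (Icc 0 T) := by
    have hprim : ContinuousOn (fun s => w 0 + ∫ u in (0:ℝ)..s, w' u) (Icc 0 T) := by
      apply continuousOn_const.add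
      have := intervalIntegral.continuousOn_primitive_interval
        (a := (0:ℝ)) (b := T) (μ := volume) (f := w') (by rwa [uIcc_of_le hT])
      rwa [uIcc_of_le hT] at this
    exact hprim.congr hrep
  obtain ⟨C, hC⟩ := isCompact_Icc.exists_bound_of_continuousOn hwcont
  intro t ⟨ht0, htT⟩
  set μ : Measure ℝ := volume.restrict (Ioc 0 t) with hμdef
  have hsub : Ioc (0:ℝ) t ⊆ Icc 0 T := fun u hu => ⟨le_of_lt hu.1, le_trans hu.2 htT⟩
  have hw'i : Integrable w' μ := hint.mono_set hsub
  set c : H := ∫ s, w' s ∂μ with hcdef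
  have hc : w t = w 0 + c := by
    rw [hrep t ⟨ht0, htT⟩, intervalIntegral.integral_of_le ht0]
  have hF : ∀ s ∈ Icc (0:ℝ) t, (∫ u in Ioc (0:ℝ) s, w' u) = w s - w 0 := by
    intro s hs
    rw [hrep s ⟨hs.1, le_trans hs.2 htT⟩, intervalIntegral.integral_of_le hs.1]
    abel
  -- integrability of inner products
  have hw'aesm : AEStronglyMeasurable w' μ := hw'i.aestronglyMeasurable
  have hwaesm : AEStronglyMeasurable w μ :=
    (hwcont.mono hsub).aestronglyMeasurable measurableSet_Ioc
  have hinner_int : Integrable (fun s => ⟪w s, w' s⟫) μ := by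
    apply Integrable.mono' (hw'i.norm.const_mul C) (hwaesm.inner hw'aesm)
    filter_upwards [ae_restrict_mem measurableSet_Ioc] with s hs
    calc ‖⟪w s, w' s⟫‖ ≤ ‖w s‖ * ‖w' s‖ := norm_inner_le_norm _ _
      _ ≤ C * ‖w' s‖ := mul_le_mul_of_nonneg_right (hC s (hsub hs)) (norm_nonneg _)
  have hconst_int : Integrable (fun s => ⟪w 0, w' s⟫) μ := hw'i.const_inner (w 0)
  -- the kernel and its two triangular parts
  set k : ℝ × ℝ → ℝ := fun p => ⟪w' p.1, w' p.2⟫ with hkdef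
  have hk_aesm : AEStronglyMeasurable k (μ.prod μ) :=
    hw'aesm.comp_fst.inner hw'aesm.comp_snd
  have hk_int : Integrable k (μ.prod μ) := by
    apply Integrable.mono' (hw'i.norm.mul_prod hw'i.norm) hk_aesm
    exact Eventually.of_forall fun p => norm_inner_le_norm _ _
  set g : ℝ × ℝ → ℝ := ({p : ℝ × ℝ | p.2 ≤ p.1}).indicator k with hgdef
  set g' : ℝ × ℝ → ℝ := ({p : ℝ × ℝ | p.1 < p.2}).indicator k with hg'def
  have hmeas_le : MeasurableSet {p : ℝ × ℝ | p.2 ≤ p.1} :=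
    measurableSet_le measurable_snd measurable_fst
  have hmeas_lt : MeasurableSet {p : ℝ × ℝ | p.1 < p.2} :=
    measurableSet_lt measurable_fst measurable_snd
  have hg_int : Integrable g (μ.prod μ) := hk_int.indicator hmeas_le
  have hg'_int : Integrable g' (μ.prod μ) := hk_int.indicator hmeas_lt
  have hsplit : k = fun p => g p + g' p := by
    funext p
    by_cases h : p.2 ≤ p.1
    · simp [hgdef, hg'def, Set.indicator_apply, h, not_lt.mpr h]
    · simp [hgdef, hg'def, Set.indicator_apply, h, lt_of_not_ge h]
  -- total integral is ‖c‖²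
  have htotal : ∫ p, k p ∂(μ.prod μ) = ‖c‖^2 := by
    rw [MeasureTheory.integral_prod _ hk_int]
    have h1 : ∀ s, (∫ u, ⟪w' s, w' u⟫ ∂μ) = ⟪w' s, c⟫ := fun s => integral_inner hw'i (w' s)
    calc (∫ s, ∫ u, k (s, u) ∂μ ∂μ) = ∫ s, ⟪w' s, c⟫ ∂μ := by
          exact integral_congr_ae (Eventually.of_forall fun s => h1 s)
      _ = ∫ s, ⟪c, w' s⟫ ∂μ := by
          exact integral_congr_ae (Eventually.of_forall fun s => real_inner_comm _ _)
      _ = ⟪c, c⟫ := integral_inner hw'i c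
      _ = ‖c‖^2 := real_inner_self_eq_norm_sq c
  -- the two triangular integrals are equal
  have hae_ne : ∀ a : ℝ, ∀ᵐ b ∂μ, b ≠ a := by
    intro a
    apply ae_restrict_of_ae
    rw [ae_iff]
    have : {b : ℝ | ¬ b ≠ a} = {a} := by ext b; simp
    rw [this]
    exact measure_singleton a
  have htri : ∫ p, g' p ∂(μ.prod μ) = ∫ p, g p ∂(μ.prod μ) := by
    rw [MeasureTheory.integral_prod_symm _ hg'_int, MeasureTheory.integral_prod _ hg_int]
    apply integral_congr_ae
    apply Eventually.of_forall
    intro a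
    apply integral_congr_ae
    filter_upwards [hae_ne a] with b hb
    by_cases h : b < a
    · have h' : b ≤ a := le_of_lt h
      simp only [hg'def, hgdef, Set.indicator_apply, Set.mem_setOf_eq, if_pos h, if_pos h']
      exact real_inner_comm _ _
    · have h' : ¬ b ≤ a := fun hle => h (lt_of_le_of_ne hle hb)
      simp [hg'def, hgdef, Set.indicator_apply, h, h']
  -- the lower-triangular integral equals A
  set A : ℝ := ∫ s, ⟪w s - w 0, w' s⟫ ∂μ with hAdef
  have hlow : ∫ p, g p ∂(μ.prod μ) = A := by
    rw [MeasureTheory.integral_prod _ hg_int]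
    apply integral_congr_ae
    filter_upwards [ae_restrict_mem measurableSet_Ioc] with s hs
    have hind : ∀ u : ℝ, g (s, u) = (Iic s).indicator (fun u => ⟪w' s, w' u⟫) u := by
      intro u
      by_cases h : u ≤ s <;>
        simp [hgdef, hkdef, Set.indicator_apply, Set.mem_setOf_eq, Set.mem_Iic, h]
    calc (∫ u, g (s, u) ∂μ) = ∫ u, (Iic s).indicator (fun u => ⟪w' s, w' u⟫) u ∂μ := by
          exact integral_congr_ae (Eventually.of_forall hind)
      _ = ∫ u in Iic s, ⟪w' s, w' u⟫ ∂μ := integral_indicator measurableSet_Iic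
      _ = ∫ u in Ioc 0 s, ⟪w' s, w' u⟫ := by
          rw [hμdef, Measure.restrict_restrict measurableSet_Iic]
          have hset : Iic s ∩ Ioc 0 t = Ioc 0 s := by
            ext u
            simp only [Set.mem_inter_iff, Set.mem_Iic, Set.mem_Ioc]
            constructor
            · rintro ⟨h1, h2, h3⟩; exact ⟨h2, h1⟩
            · rintro ⟨h1, h2⟩; exact ⟨h2, h1, le_trans h2 hs.2⟩
          rw [hset]
      _ = ⟪w' s, ∫ u in Ioc 0 s, w' u⟫ :=
          integral_inner (hint.mono_set (fun u hu => ⟨le_of_lt hu.1, le_trans hu.2 (le_trans hs.2 htT)⟩)) (w' s)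
      _ = ⟪w' s, w s - w 0⟫ := by rw [hF s ⟨le_of_lt hs.1, hs.2⟩]
      _ = ⟪w s - w 0, w' s⟫ := real_inner_comm _ _
  -- conclude ‖c‖² = 2A
  have hnormc : ‖c‖^2 = 2 * A := by
    rw [← htotal, hsplit, integral_add hg_int hg'_int, htri, hlow]
    ring
  -- A = ∫⟪w,w'⟫ - ⟪w0,c⟫
  have hA : A = (∫ s, ⟪w s, w' s⟫ ∂μ) - ⟪w 0, c⟫ := by
    rw [hAdef]
    have : (fun s => ⟪w s - w 0, w' s⟫) = fun s => ⟪w s, w' s⟫ - ⟪w 0, w' s⟫ := by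
      funext s; rw [inner_sub_left]
    rw [this, integral_sub hinner_int hconst_int, integral_inner hw'i (w 0)]
  rw [intervalIntegral.integral_of_le ht0, hc, norm_add_sq_real]
  have : (∫ s, ⟪w s, w' s⟫ ∂μ) = A + ⟪w 0, c⟫ := by rw [hA]; ring
  rw [show (∫ s in Ioc 0 t, ⟪w s, w' s⟫) = ∫ s, ⟪w s, w' s⟫ ∂μ from rfl, this]
  linarith [hnormc]

lemma subdiff_mono_pair {φ : H → EReal} (hbot : ∀ z, φ z ≠ ⊥) (hproper : ∃ y, φ y ≠ ⊤)
    {a b va vb : H} (ha : IsSubdiff φ a va) (hb : IsSubdiff φ b vb) :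
    0 ≤ ⟪va - vb, a - b⟫ := by
  obtain ⟨y₀, hy₀⟩ := hproper
  have hfin : ∀ (z vz : H), IsSubdiff φ z vz → φ z ≠ ⊤ := by
    intro z vz hz htop
    have := hz y₀
    rw [htop] at this
    have : (⊤ : EReal) ≤ φ y₀ := by
      rw [show (⊤ : EReal) + ((⟪vz, y₀ - z⟫ : ℝ) : EReal) = ⊤ from EReal.top_add_coe _] at this
      exact this
    exact hy₀ (top_le_iff.mp this)
  have hfa := hfin a va ha
  have hfb := hfin b vb hb
  set ra := (φ a).toReal with hradef
  set rb := (φ b).toReal with hrbdef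
  have hca : φ a = (ra : EReal) := (EReal.coe_toReal hfa (hbot a)).symm
  have hcb : φ b = (rb : EReal) := (EReal.coe_toReal hfb (hbot b)).symm
  have h1 : ra + ⟪va, b - a⟫ ≤ rb := by
    have := ha b
    rw [hca, hcb, ← EReal.coe_add] at this
    exact_mod_cast this
  have h2 : rb + ⟪vb, a - b⟫ ≤ ra := by
    have := hb a
    rw [hca, hcb, ← EReal.coe_add] at this
    exact_mod_cast this
  have e1 : ⟪va, b - a⟫ = -⟪va, a - b⟫ := by
    rw [show b - a = -(a - b) from by abel, inner_neg_right]
  rw [inner_sub_left]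
  have e2 : (⟪vb, a - b⟫ : ℝ) = ⟪vb, a - b⟫ := rfl
  rw [e1] at h1
  linarith

end Aux

open scoped RealInnerProductSpace in
theorem stmt19 (φ : H → EReal) (ψ : H → ℝ) (ψ' : H → H) (hst : Standing φ ψ ψ')
    (lam : ℝ → ℝ) (T c₀ : ℝ) (hT : 0 < T) (hc₀ : 0 < c₀)
    (hlam : ∀ t ∈ Set.Icc (0:ℝ) T, c₀ ≤ lam t)
    (x v x' v' : ℝ → H) (x₀ v₀ : H) (hx0 : x 0 = x₀) (hv0 : v 0 = v₀)
    (hv₀ : IsSubdiff φ x₀ v₀)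
    (sol : StrongSol φ ψ' lam T x v x' v') :
    ∀ t ∈ Set.Icc (0:ℝ) T,
      (∫ τ in (0:ℝ)..t, ‖v' τ‖ ^ 2) + ‖v t‖ ^ 2 ≤
        ‖v₀‖ ^ 2 + ∫ τ in (0:ℝ)..T, ‖ψ' (x τ)‖ ^ 2 := by
  obtain ⟨⟨hbot, hproper, _, _⟩, hcvψ, hgradψ, _⟩ := hst
  have hψ'cont : Continuous ψ' := grad_cont hcvψ hgradψ
  -- continuity of x, v on [0,T]
  have hcont_of_rep : ∀ (w w' : ℝ → H), IntegrableOn w' (Icc 0 T) →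
      (∀ s ∈ Icc (0:ℝ) T, w s = w 0 + ∫ u in (0:ℝ)..s, w' u) → ContinuousOn w (Icc 0 T) := by
    intro w w' hint hrep
    have hprim : ContinuousOn (fun s => w 0 + ∫ u in (0:ℝ)..s, w' u) (Icc 0 T) := by
      apply continuousOn_const.add
      have := intervalIntegral.continuousOn_primitive_interval
        (a := (0:ℝ)) (b := T) (μ := volume) (f := w') (by rwa [uIcc_of_le hT.le])
      rwa [uIcc_of_le hT.le] at this
    exact hprim.congr hrep
  have hxcont : ContinuousOn x (Icc 0 T) := hcont_of_rep x x' sol.xint sol.xrep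
  have hvcont : ContinuousOn v (Icc 0 T) := hcont_of_rep v v' sol.vint sol.vrep
  obtain ⟨C, hC⟩ := isCompact_Icc.exists_bound_of_continuousOn hvcont
  set Q : ℝ → ℝ := fun τ => ‖ψ' (x τ)‖ ^ 2 with hQdef
  have hQcont : ContinuousOn Q (Icc 0 T) :=
    ((hψ'cont.comp_continuousOn hxcont).norm.pow 2)
  have hQint : IntegrableOn Q (Icc 0 T) := hQcont.integrableOn_Icc
  -- the a.e. pointwise inequality
  have haemain : ∀ᵐ τ ∂(volume.restrict (Ioo 0 T)),
      ‖v' τ‖ ^ 2 + 2 * ⟪v τ, v' τ⟫ ≤ Q τ := by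
    filter_upwards [sol.xderiv, sol.vderiv, sol.eqn, ae_restrict_mem measurableSet_Ioo]
      with τ hx'd hv'd heqn hmem
    have hmemIcc : τ ∈ Icc (0:ℝ) T := Ioo_subset_Icc_self hmem
    -- monotonicity of the subdifferential along the trajectory
    have hmono : 0 ≤ ⟪x' τ, v' τ⟫ := by
      have htend : Tendsto (fun s => ⟪slope x τ s, slope v τ s⟫) (𝓝[≠] τ)
          (𝓝 ⟪x' τ, v' τ⟫) :=
        (hasDerivAt_iff_tendsto_slope.mp hx'd).inner (hasDerivAt_iff_tendsto_slope.mp hv'd)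
      refine ge_of_tendsto htend ?_
      have hnb : Ioo (0:ℝ) T ∈ 𝓝[≠] τ := nhdsWithin_le_nhds (isOpen_Ioo.mem_nhds hmem)
      filter_upwards [hnb, self_mem_nhdsWithin] with s hs hne
      have hq : 0 ≤ ⟪v s - v τ, x s - x τ⟫ :=
        subdiff_mono_pair hbot hproper
          (sol.subdiff s (Ioo_subset_Icc_self hs)) (sol.subdiff τ hmemIcc)
      have hslopes : ⟪slope x τ s, slope v τ s⟫
          = ((s - τ)⁻¹) ^ 2 * ⟪x s - x τ, v s - v τ⟫ := by
        rw [slope_def_module, slope_def_module, real_inner_smul_left, real_inner_smul_right]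
        ring
      rw [hslopes]
      apply mul_nonneg (sq_nonneg _)
      rw [real_inner_comm] at hq
      rw [show ⟪x s - x τ, v s - v τ⟫ = ⟪x s - x τ, v s - v τ⟫ from rfl]
      exact hq
    -- the equation
    have hval : v' τ + v τ = -(lam τ • x' τ) - ψ' (x τ) := by
      have h := heqn
      rw [show lam τ • x' τ + v' τ + v τ + ψ' (x τ)
          = (v' τ + v τ) + (lam τ • x' τ + ψ' (x τ)) from by abel] at h
      rw [add_eq_zero_iff_eq_neg] at h
      rw [h]; abel
    have hinner : ‖v' τ‖ ^ 2 + ⟪v τ, v' τ⟫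
        = -(lam τ * ⟪x' τ, v' τ⟫) - ⟪ψ' (x τ), v' τ⟫ := by
      have h := congrArg (fun z => (⟪z, v' τ⟫ : ℝ)) hval
      simp only [inner_add_left, inner_sub_left, inner_neg_left, real_inner_smul_left] at h
      rw [real_inner_self_eq_norm_sq] at h
      linarith [h]
    have hlamτ : c₀ ≤ lam τ := hlam τ hmemIcc
    have hlam_nonneg : 0 ≤ lam τ * ⟪x' τ, v' τ⟫ :=
      mul_nonneg (le_trans hc₀.le hlamτ) hmono
    have hcs : |⟪ψ' (x τ), v' τ⟫| ≤ ‖ψ' (x τ)‖ * ‖v' τ‖ := abs_real_inner_le_norm _ _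
    have habs := abs_le.mp hcs
    show ‖v' τ‖ ^ 2 + 2 * ⟪v τ, v' τ⟫ ≤ ‖ψ' (x τ)‖ ^ 2
    nlinarith [sq_nonneg (‖ψ' (x τ)‖ - ‖v' τ‖), habs.1, hinner, hlam_nonneg]
  -- now fix t and integrate
  intro t ht
  obtain ⟨ht0, htT⟩ := ht
  set ν : Measure ℝ := volume.restrict (Ioo 0 t) with hνdef
  have hsubT : Ioo (0:ℝ) t ⊆ Ioo 0 T := Ioo_subset_Ioo le_rfl htT
  have hsubIcc : Ioo (0:ℝ) t ⊆ Icc 0 T := fun u hu => ⟨hu.1.le, le_trans hu.2.le htT⟩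
  have hv'i : Integrable v' ν := sol.vint.mono_set hsubIcc
  have hvaesm : AEStronglyMeasurable v ν :=
    (hvcont.mono hsubIcc).aestronglyMeasurable measurableSet_Ioo
  have hvvi : Integrable (fun τ => ⟪v τ, v' τ⟫) ν := by
    apply Integrable.mono' (hv'i.norm.const_mul C) (hvaesm.inner hv'i.aestronglyMeasurable)
    filter_upwards [ae_restrict_mem measurableSet_Ioo] with τ hτ
    calc ‖⟪v τ, v' τ⟫‖ ≤ ‖v τ‖ * ‖v' τ‖ := norm_inner_le_norm _ _
      _ ≤ C * ‖v' τ‖ := mul_le_mul_of_nonneg_right (hC τ (hsubIcc hτ)) (norm_nonneg _)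
  have hQi : Integrable Q ν := hQint.mono_set hsubIcc
  have haet : ∀ᵐ τ ∂ν, ‖v' τ‖ ^ 2 + 2 * ⟪v τ, v' τ⟫ ≤ Q τ :=
    ae_restrict_of_ae_restrict_of_subset hsubT haemain
  have hbound : ∀ᵐ τ ∂ν, ‖(fun τ => ‖v' τ‖ ^ 2) τ‖ ≤ Q τ + 2 * (C * ‖v' τ‖) := by
    filter_upwards [haet, ae_restrict_mem measurableSet_Ioo] with τ h1 h2
    have hcv : |⟪v τ, v' τ⟫| ≤ C * ‖v' τ‖ := by
      calc |⟪v τ, v' τ⟫| ≤ ‖v τ‖ * ‖v' τ‖ := abs_real_inner_le_norm _ _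
        _ ≤ C * ‖v' τ‖ := mul_le_mul_of_nonneg_right (hC τ (hsubIcc h2)) (norm_nonneg _)
    have habs := abs_le.mp hcv
    rw [Real.norm_eq_abs, abs_of_nonneg (sq_nonneg _)]
    linarith
  have hP1 : Integrable (fun τ => ‖v' τ‖ ^ 2) ν := by
    apply Integrable.mono' (hQi.add ((hv'i.norm.const_mul C).const_mul 2))
      ((continuous_pow 2).comp_aestronglyMeasurable hv'i.aestronglyMeasurable.norm)
    exact hbound
  -- put everything together
  have hid := energy_identity hT.le v v' sol.vint sol.vrep t ⟨ht0, htT⟩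
  have e1 : (∫ τ in (0:ℝ)..t, ‖v' τ‖ ^ 2) = ∫ τ, ‖v' τ‖ ^ 2 ∂ν := by
    rw [intervalIntegral.integral_of_le ht0, integral_Ioc_eq_integral_Ioo]
  have e2 : (∫ τ in (0:ℝ)..t, ⟪v τ, v' τ⟫) = ∫ τ, ⟪v τ, v' τ⟫ ∂ν := by
    rw [intervalIntegral.integral_of_le ht0, integral_Ioc_eq_integral_Ioo]
  have e3 : (∫ τ in (0:ℝ)..T, Q τ) = ∫ τ in Ioo (0:ℝ) T, Q τ := by
    rw [intervalIntegral.integral_of_le hT.le, integral_Ioc_eq_integral_Ioo]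
  have hsum : (∫ τ, (‖v' τ‖ ^ 2 + 2 * ⟪v τ, v' τ⟫) ∂ν)
      = (∫ τ, ‖v' τ‖ ^ 2 ∂ν) + 2 * ∫ τ, ⟪v τ, v' τ⟫ ∂ν := by
    rw [integral_add hP1 (hvvi.const_mul 2), integral_const_mul]
  have hPQ : (∫ τ, (‖v' τ‖ ^ 2 + 2 * ⟪v τ, v' τ⟫) ∂ν) ≤ ∫ τ, Q τ ∂ν :=
    integral_mono_ae (hP1.add (hvvi.const_mul 2)) hQi haet
  have hQmono : (∫ τ, Q τ ∂ν) ≤ ∫ τ in Ioo (0:ℝ) T, Q τ := by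
    apply setIntegral_mono_set (hQint.mono_set Ioo_subset_Icc_self)
    · filter_upwards with τ
      exact sq_nonneg _
    · exact HasSubset.Subset.eventuallyLE hsubT
  rw [hv0] at hid
  rw [e1, e3, hid, e2]
  linarith
end
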